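/- arXiv:1412.2887 — 6 statements merged into one kernel-verified Lean document; each statement's English description precedes it below -/
import Mathlib

section
/- (Proposition 1 of the paper.) Consider a sequence indexed by t ∈ ℕ of without-replacement sampling designs on finite populations U_t of size N_t with N_t → ∞, with inclusion probabilities π_{k,t}, average sample sizes n_t = Σ_{k∈U_t} π_{k,t}, variables y_t : U_t → ℝ and totals t_{y,t} = Σ_{k∈U_t} y_{k,t}. Assume: (H1) n_t/N_t → f for some f ∈ (0,1); (H2) there exists λ₁ > 0 with min_{k∈U_t} π_{k,t} ≥ λ₁ for all t; (H3) there exists C₁ with (1/N_t) Σ_{k∈U_t} y_{k,t}² ≤ C₁ for all t; (H4) limsup_{t→∞} n_t · max_{k≠l∈U_t} |π_{kl,t} − π_{k,t} π_{l,t}| < ∞. Then E[ (N_t^{-1}(t̂_{yπ,t} − t_{y,t}))² ] = O(n_t^{-1}), i.e. there exist a constant K and t₀ such that for all t ≥ t₀, E[ (N_t^{-1}(t̂_{yπ,t} − t_{y,t}))² ] ≤ K / n_t. -/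
open MeasureTheory ProbabilityTheory Finset Filter

lemma bdd_int {Ωt : Type*} [MeasurableSpace Ωt] (μ : Measure Ωt) [IsProbabilityMeasure μ]
    (X : Ωt → ℝ) (hX : Measurable X) (c : ℝ) (hb : ∀ ω, |X ω| ≤ c) : Integrable X μ :=
  (integrable_const c).mono' hX.aestronglyMeasurable (Filter.Eventually.of_forall fun ω => hb ω)

lemma cov_eq {Ωt : Type*} [MeasurableSpace Ωt] (μ : Measure Ωt) [IsProbabilityMeasure μ]
    (X Y : Ωt → ℝ) (hX : Measurable X) (hY : Measurable Y)
    (hXb : ∀ ω, |X ω| ≤ 1) (hYb : ∀ ω, |Y ω| ≤ 1) (a b : ℝ)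
    (ha : (∫ ω, X ω ∂μ) = a) (hb : (∫ ω, Y ω ∂μ) = b) :
    ∫ ω, (X ω - a) * (Y ω - b) ∂μ = (∫ ω, X ω * Y ω ∂μ) - a * b := by
  have hXi : Integrable X μ := bdd_int μ X hX 1 hXb
  have hYi : Integrable Y μ := bdd_int μ Y hY 1 hYb
  have hXYi : Integrable (fun ω => X ω * Y ω) μ := by
    refine bdd_int μ _ (hX.mul hY) 1 fun ω => ?_
    rw [abs_mul]
    calc |X ω| * |Y ω| ≤ 1 * 1 := by
          exact mul_le_mul (hXb ω) (hYb ω) (abs_nonneg _) zero_le_one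
      _ = 1 := one_mul 1
  have hre : (fun ω => (X ω - a) * (Y ω - b))
      = fun ω => (X ω * Y ω - a * Y ω) - (b * X ω - a * b) := by
    funext ω; ring
  have h1 : Integrable (fun ω => X ω * Y ω - a * Y ω) μ := hXYi.sub (hYi.const_mul a)
  have h2 : Integrable (fun ω => b * X ω - a * b) μ := (hXi.const_mul b).sub (integrable_const _)
  rw [hre]
  rw [integral_sub h1 h2]
  rw [integral_sub hXYi (hYi.const_mul a)]
  rw [integral_sub (hXi.const_mul b) (integrable_const _)]
  rw [integral_const_mul, integral_const_mul, integral_const, ha, hb]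
  simp [measure_univ]
  ring

lemma var_bound {Ωt : Type*} [MeasurableSpace Ωt] (μ : Measure Ωt) [IsProbabilityMeasure μ]
    (N : ℕ) (hN : 0 < N)
    (I : Fin N → Ωt → ℝ) (hImeas : ∀ k, Measurable (I k))
    (hI01 : ∀ k ω, I k ω = 0 ∨ I k ω = 1)
    (π : Fin N → ℝ) (hπ : ∀ k, π k = ∫ ω, I k ω ∂μ)
    (hπle : ∀ k, π k ≤ 1)
    (π₂ : Fin N → Fin N → ℝ) (hπ₂ : ∀ k l, k ≠ l → π₂ k l = ∫ ω, I k ω * I l ω ∂μ)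
    (y : Fin N → ℝ) (lam₁ : ℝ) (hlam₁ : 0 < lam₁) (H2 : ∀ k, lam₁ ≤ π k)
    (D : ℝ) (hD : 0 ≤ D) (H4 : ∀ k l, k ≠ l → |π₂ k l - π k * π l| ≤ D) :
    (∫ ω, ((N : ℝ)⁻¹ * ((∑ k, (y k / π k) * I k ω) - ∑ k, y k)) ^ 2 ∂μ)
      ≤ (∑ k, y k ^ 2) / ((N : ℝ) ^ 2 * lam₁) + D * (∑ k, y k ^ 2) / ((N : ℝ) * lam₁ ^ 2) := by
  have hπpos : ∀ k, 0 < π k := fun k => lt_of_lt_of_le hlam₁ (H2 k)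
  set c : Fin N → ℝ := fun k => y k / π k with hc
  set Z : Fin N → Ωt → ℝ := fun k ω => c k * (I k ω - π k) with hZ
  have hIb : ∀ k ω, |I k ω| ≤ 1 := by
    intro k ω; rcases hI01 k ω with h | h <;> rw [h] <;> norm_num
  have hSZ : ∀ ω, (∑ k, (y k / π k) * I k ω) - ∑ k, y k = ∑ k, Z k ω := by
    intro ω
    rw [← Finset.sum_sub_distrib]
    refine Finset.sum_congr rfl fun k _ => ?_
    have : c k * π k = y k := div_mul_cancel₀ _ (hπpos k).ne'
    simp only [hZ, hc]
    rw [mul_sub, this]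
  have hrw : (fun ω => ((N : ℝ)⁻¹ * ((∑ k, (y k / π k) * I k ω) - ∑ k, y k)) ^ 2)
      = fun ω => ((N : ℝ)⁻¹) ^ 2 * ∑ k, ∑ l, Z k ω * Z l ω := by
    funext ω
    rw [hSZ ω, mul_pow, sq (∑ k, Z k ω), Finset.sum_mul_sum]
  -- integrability
  have hZmeas : ∀ k, Measurable (Z k) := fun k =>
    ((hImeas k).sub measurable_const).const_mul (c k)
  have hZb : ∀ k ω, |Z k ω| ≤ |c k| := by
    intro k ω
    rw [hZ, abs_mul]
    have h1 : |I k ω - π k| ≤ 1 := by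
      rcases hI01 k ω with h | h <;> rw [h, abs_le] <;>
        constructor <;> nlinarith [hπpos k, hπle k]
    calc |c k| * |I k ω - π k| ≤ |c k| * 1 :=
          mul_le_mul_of_nonneg_left h1 (abs_nonneg _)
      _ = |c k| := mul_one _
  have hZZint : ∀ k l, Integrable (fun ω => Z k ω * Z l ω) μ := by
    intro k l
    refine bdd_int μ _ ((hZmeas k).mul (hZmeas l)) (|c k| * |c l|) fun ω => ?_
    rw [abs_mul]
    exact mul_le_mul (hZb k ω) (hZb l ω) (abs_nonneg _) (abs_nonneg _)
  -- compute each covariance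
  have hcov : ∀ k l, (∫ ω, Z k ω * Z l ω ∂μ)
      = c k * c l * ((∫ ω, I k ω * I l ω ∂μ) - π k * π l) := by
    intro k l
    have h1 : (fun ω => Z k ω * Z l ω)
        = fun ω => (c k * c l) * ((I k ω - π k) * (I l ω - π l)) := by
      funext ω; simp only [hZ]; ring
    rw [h1, integral_const_mul,
      cov_eq μ (I k) (I l) (hImeas k) (hImeas l) (hIb k) (hIb l) (π k) (π l)
        (hπ k).symm (hπ l).symm]
  -- the double sum
  have hsplit : (∫ ω, ((N : ℝ)⁻¹ * ((∑ k, (y k / π k) * I k ω) - ∑ k, y k)) ^ 2 ∂μ)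
      = ((N : ℝ)⁻¹) ^ 2 * ∑ k, ∑ l, c k * c l * ((∫ ω, I k ω * I l ω ∂μ) - π k * π l) := by
    rw [hrw, integral_const_mul, integral_finset_sum _ fun k _ =>
      integrable_finset_sum _ fun l _ => hZZint k l]
    congr 1
    refine Finset.sum_congr rfl fun k _ => ?_
    rw [integral_finset_sum _ fun l _ => hZZint k l]
    exact Finset.sum_congr rfl fun l _ => hcov k l
  -- bound terms
  have hdiag : ∀ k : Fin N, c k * c k * ((∫ ω, I k ω * I k ω ∂μ) - π k * π k)
      ≤ y k ^ 2 / lam₁ := by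
    intro k
    have hIkk : (∫ ω, I k ω * I k ω ∂μ) = π k := by
      rw [hπ k]
      refine integral_congr_ae (Filter.Eventually.of_forall fun ω => ?_)
      rcases hI01 k ω with h | h <;> simp [h]
    rw [hIkk]
    have hid : c k * c k * (π k - π k * π k) = y k ^ 2 * ((1 - π k) / π k) := by
      have hπne : π k ≠ 0 := (hπpos k).ne'
      simp only [hc]
      field_simp
    rw [hid]
    have h1 : (1 - π k) / π k ≤ 1 / lam₁ :=
      div_le_div₀ (by norm_num) (by nlinarith [hπpos k]) hlam₁ (H2 k)
    calc y k ^ 2 * ((1 - π k) / π k) ≤ y k ^ 2 * (1 / lam₁) :=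
          mul_le_mul_of_nonneg_left h1 (sq_nonneg _)
      _ = y k ^ 2 / lam₁ := by ring
  have hoff : ∀ k l : Fin N, k ≠ l →
      c k * c l * ((∫ ω, I k ω * I l ω ∂μ) - π k * π l)
        ≤ |y k| * |y l| * (D / lam₁ ^ 2) := by
    intro k l hkl
    have habsc : ∀ m : Fin N, |c m| ≤ |y m| / lam₁ := by
      intro m
      simp only [hc]
      rw [abs_div, abs_of_pos (hπpos m)]
      gcongr
      exact H2 m
    have hΔ : |(∫ ω, I k ω * I l ω ∂μ) - π k * π l| ≤ D := by
      rw [← hπ₂ k l hkl]; exact H4 k l hkl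
    calc c k * c l * ((∫ ω, I k ω * I l ω ∂μ) - π k * π l)
        ≤ |c k * c l * ((∫ ω, I k ω * I l ω ∂μ) - π k * π l)| := le_abs_self _
      _ = |c k| * |c l| * |(∫ ω, I k ω * I l ω ∂μ) - π k * π l| := by
          rw [abs_mul, abs_mul]
      _ ≤ (|y k| / lam₁) * (|y l| / lam₁) * D := by
          gcongr
          · exact habsc k
          · exact habsc l
      _ = |y k| * |y l| * (D / lam₁ ^ 2) := by ring
  have hbnd_nonneg : ∀ k l : Fin N, 0 ≤ |y k| * |y l| * (D / lam₁ ^ 2) := fun k l =>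
    mul_nonneg (mul_nonneg (abs_nonneg _) (abs_nonneg _))
      (div_nonneg hD (by positivity))
  have hbound : ∑ k, ∑ l, c k * c l * ((∫ ω, I k ω * I l ω ∂μ) - π k * π l)
      ≤ (∑ k, y k ^ 2) / lam₁ + (D / lam₁ ^ 2) * ((N : ℝ) * ∑ k, y k ^ 2) := by
    have step1 : ∑ k, ∑ l, c k * c l * ((∫ ω, I k ω * I l ω ∂μ) - π k * π l)
        ≤ ∑ k : Fin N, (y k ^ 2 / lam₁ + ∑ l, |y k| * |y l| * (D / lam₁ ^ 2)) := by
      refine Finset.sum_le_sum fun k _ => ?_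
      rw [← Finset.add_sum_erase univ
        (fun l => c k * c l * ((∫ ω, I k ω * I l ω ∂μ) - π k * π l)) (mem_univ k)]
      refine add_le_add (hdiag k) ?_
      calc ∑ l ∈ univ.erase k, c k * c l * ((∫ ω, I k ω * I l ω ∂μ) - π k * π l)
          ≤ ∑ l ∈ univ.erase k, |y k| * |y l| * (D / lam₁ ^ 2) :=
            Finset.sum_le_sum fun l hl => hoff k l (Finset.ne_of_mem_erase hl).symm
        _ ≤ ∑ l, |y k| * |y l| * (D / lam₁ ^ 2) :=
            Finset.sum_le_sum_of_subset_of_nonneg (Finset.subset_univ _)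
              (fun l _ _ => hbnd_nonneg k l)
    have step2 : ∑ k : Fin N, (y k ^ 2 / lam₁ + ∑ l, |y k| * |y l| * (D / lam₁ ^ 2))
        = (∑ k, y k ^ 2) / lam₁ + (D / lam₁ ^ 2) * (∑ k, |y k|) ^ 2 := by
      rw [Finset.sum_add_distrib, ← Finset.sum_div]
      congr 1
      rw [pow_two (∑ k, |y k|), Finset.sum_mul_sum, Finset.mul_sum]
      refine Finset.sum_congr rfl fun k _ => ?_
      rw [Finset.mul_sum]
      exact Finset.sum_congr rfl fun l _ => by ring
    have step3 : (∑ k, |y k|) ^ 2 ≤ (N : ℝ) * ∑ k, y k ^ 2 := by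
      have := sq_sum_le_card_mul_sum_sq (s := (univ : Finset (Fin N)))
        (f := fun k => |y k|)
      simpa [sq_abs, Finset.card_univ] using this
    calc ∑ k, ∑ l, c k * c l * ((∫ ω, I k ω * I l ω ∂μ) - π k * π l)
        ≤ (∑ k, y k ^ 2) / lam₁ + (D / lam₁ ^ 2) * (∑ k, |y k|) ^ 2 := by
          rw [← step2]; exact step1
      _ ≤ (∑ k, y k ^ 2) / lam₁ + (D / lam₁ ^ 2) * ((N : ℝ) * ∑ k, y k ^ 2) := by
          refine add_le_add_right (mul_le_mul_of_nonneg_left step3 ?_) _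
          exact div_nonneg hD (by positivity)
  have hNne : (N : ℝ) ≠ 0 := Nat.cast_ne_zero.mpr hN.ne'
  rw [hsplit]
  calc ((N : ℝ)⁻¹) ^ 2 * ∑ k, ∑ l, c k * c l * ((∫ ω, I k ω * I l ω ∂μ) - π k * π l)
      ≤ ((N : ℝ)⁻¹) ^ 2 * ((∑ k, y k ^ 2) / lam₁ + (D / lam₁ ^ 2) * ((N : ℝ) * ∑ k, y k ^ 2)) :=
        mul_le_mul_of_nonneg_left hbound (by positivity)
    _ = (∑ k, y k ^ 2) / ((N : ℝ) ^ 2 * lam₁) + D * (∑ k, y k ^ 2) / ((N : ℝ) * lam₁ ^ 2) := by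
        field_simp

/-- Proposition 1: under (H1)–(H4), the Narain–Horvitz–Thompson estimator is
mean-square consistent, with `E[(N_t⁻¹(t̂_{yπ,t} − t_{y,t}))²] = O(n_t⁻¹)`. -/
theorem ht_mean_square_consistency_prop1
    (N : ℕ → ℕ) (hNpos : ∀ t, 1 ≤ N t)
    (hNinf : Tendsto (fun t => (N t : ℝ)) atTop atTop)
    (Ω : ℕ → Type*) [∀ t, MeasurableSpace (Ω t)]
    (μ : ∀ t, Measure (Ω t)) [∀ t, IsProbabilityMeasure (μ t)]
    (I : ∀ t, Fin (N t) → Ω t → ℝ)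
    (hImeas : ∀ t k, Measurable (I t k))
    (hI01 : ∀ t k ω, I t k ω = 0 ∨ I t k ω = 1)
    (π : ∀ t, Fin (N t) → ℝ)
    (hπ : ∀ t k, π t k = ∫ ω, I t k ω ∂(μ t))
    (hπpos : ∀ t k, 0 < π t k) (hπle : ∀ t k, π t k ≤ 1)
    (π₂ : ∀ t, Fin (N t) → Fin (N t) → ℝ)
    (hπ₂ : ∀ t k l, k ≠ l → π₂ t k l = ∫ ω, I t k ω * I t l ω ∂(μ t))
    (y : ∀ t, Fin (N t) → ℝ)
    (n : ℕ → ℝ) (hn : ∀ t, n t = ∑ k, π t k)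
    -- (H1)
    (f : ℝ) (hf : f ∈ Set.Ioo (0 : ℝ) 1)
    (H1 : Tendsto (fun t => n t / N t) atTop (nhds f))
    -- (H2)
    (lam₁ : ℝ) (hlam₁ : 0 < lam₁) (H2 : ∀ t k, lam₁ ≤ π t k)
    -- (H3)
    (C₁ : ℝ) (H3 : ∀ t, (1 / (N t : ℝ)) * ∑ k, y t k ^ 2 ≤ C₁)
    -- (H4): limsup_t n_t · max_{k≠l} |π_{kl,t} − π_{k,t} π_{l,t}| < ∞
    (B : ℝ)
    (H4 : ∀ᶠ t in atTop, ∀ k l : Fin (N t), k ≠ l →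
            n t * |π₂ t k l - π t k * π t l| ≤ B) :
    ∃ K : ℝ, ∃ t₀ : ℕ, ∀ t ≥ t₀,
      (∫ ω, ((N t : ℝ)⁻¹ * ((∑ k, (y t k / π t k) * I t k ω) - ∑ k, y t k)) ^ 2
          ∂(μ t)) ≤ K / n t := by
  obtain ⟨hf0, hf1⟩ := hf
  have hNt : ∀ t, (0 : ℝ) < N t := fun t => by
    exact_mod_cast Nat.lt_of_lt_of_le Nat.zero_lt_one (hNpos t)
  have hC₁ : 0 ≤ C₁ := by
    have h3 := H3 0
    have h0 : (0 : ℝ) ≤ (1 / (N 0 : ℝ)) * ∑ k, y 0 k ^ 2 := by positivity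
    linarith
  have hev1 : ∀ᶠ t in atTop, (2 : ℝ) ≤ (N t : ℝ) := hNinf.eventually_ge_atTop 2
  have hev2 : ∀ᶠ t in atTop, n t / N t < 1 := H1.eventually_lt_const hf1
  obtain ⟨t₀, ht₀⟩ := eventually_atTop.mp ((hev1.and hev2).and H4)
  refine ⟨C₁ / lam₁ + B * C₁ / lam₁ ^ 2, t₀, fun t ht => ?_⟩
  obtain ⟨⟨hN2, hratio⟩, hH4t⟩ := ht₀ t ht
  have hnpos : 0 < n t := by
    rw [hn]
    calc (0 : ℝ) < (N t : ℝ) * lam₁ := mul_pos (hNt t) hlam₁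
      _ = ∑ _k : Fin (N t), lam₁ := by
          rw [Finset.sum_const, Finset.card_univ, Fintype.card_fin, nsmul_eq_mul]
      _ ≤ ∑ k, π t k := Finset.sum_le_sum fun k _ => H2 t k
  have hnN : n t ≤ (N t : ℝ) := le_of_lt ((div_lt_one (hNt t)).mp hratio)
  have hB : 0 ≤ B := by
    have h2N : 2 ≤ N t := by exact_mod_cast hN2
    have hkl : (⟨0, by omega⟩ : Fin (N t)) ≠ ⟨1, by omega⟩ := by
      simp [Fin.ext_iff]
    have h := hH4t ⟨0, by omega⟩ ⟨1, by omega⟩ hkl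
    exact le_trans (mul_nonneg hnpos.le (abs_nonneg _)) h
  have hD : 0 ≤ B / n t := div_nonneg hB hnpos.le
  have hH4' : ∀ k l : Fin (N t), k ≠ l →
      |π₂ t k l - π t k * π t l| ≤ B / n t := by
    intro k l hkl
    rw [le_div_iff₀ hnpos, mul_comm]
    exact hH4t k l hkl
  have key := var_bound (μ t) (N t) (Nat.lt_of_lt_of_le Nat.zero_lt_one (hNpos t))
    (I t) (hImeas t) (hI01 t) (π t) (hπ t) (hπle t) (π₂ t) (hπ₂ t) (y t)
    lam₁ hlam₁ (H2 t) (B / n t) hD hH4'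
  have hy2 : ∑ k, y t k ^ 2 ≤ (N t : ℝ) * C₁ := by
    have h := H3 t
    rw [one_div] at h
    exact (inv_mul_le_iff₀ (hNt t)).mp h
  have hden1 : (0 : ℝ) < (N t : ℝ) ^ 2 * lam₁ := mul_pos (pow_pos (hNt t) 2) hlam₁
  have hden2 : (0 : ℝ) < (N t : ℝ) * lam₁ ^ 2 := mul_pos (hNt t) (pow_pos hlam₁ 2)
  calc (∫ ω, ((N t : ℝ)⁻¹ * ((∑ k, (y t k / π t k) * I t k ω) - ∑ k, y t k)) ^ 2 ∂(μ t))
      ≤ (∑ k, y t k ^ 2) / ((N t : ℝ) ^ 2 * lam₁)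
        + (B / n t) * (∑ k, y t k ^ 2) / ((N t : ℝ) * lam₁ ^ 2) := key
    _ ≤ ((N t : ℝ) * C₁) / ((N t : ℝ) ^ 2 * lam₁)
        + (B / n t) * ((N t : ℝ) * C₁) / ((N t : ℝ) * lam₁ ^ 2) := by
        refine add_le_add ((div_le_div_iff_of_pos_right hden1).mpr hy2)
          ((div_le_div_iff_of_pos_right hden2).mpr (mul_le_mul_of_nonneg_left hy2 hD))
    _ = C₁ / ((N t : ℝ) * lam₁) + B * C₁ / (n t * lam₁ ^ 2) := by
        field_simp
    _ ≤ C₁ / (n t * lam₁) + B * C₁ / (n t * lam₁ ^ 2) := by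
        refine add_le_add_left (div_le_div_of_nonneg_left hC₁
          (mul_pos hnpos hlam₁) (mul_le_mul_of_nonneg_right hnN hlam₁.le)) _
    _ = (C₁ / lam₁ + B * C₁ / lam₁ ^ 2) / n t := by
        field_simp
end

section
/- Let a ≥ 0 and suppose the second-order inclusion probabilities satisfy π_{kl} ≤ (1 + a/n) π_k π_l for all k ≠ l in U, where n = Σ_{k∈U} π_k, and suppose y_k ≥ 0 for all k ∈ U. Then the variance of the Narain–Horvitz–Thompson estimator satisfies Var(t̂_yπ) ≤ N² ( 1/(N · min_{l∈U} π_l) + a/n ) × (1/N) Σ_{k∈U} y_k². -/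
open MeasureTheory ProbabilityTheory Finset

/-- If `π_{kl} ≤ (1 + a/n) π_k π_l` for all `k ≠ l` (with `a ≥ 0`,
`n = ∑_k π_k`) and `y` is nonnegative, then
`Var(t̂_yπ) ≤ N² (1/(N·min_l π_l) + a/n) × (1/N) ∑_k y_k²`. -/
theorem ht_variance_bound_H4b
    (N : ℕ) [NeZero N]
    (Ω : Type*) [MeasurableSpace Ω] (μ : Measure Ω) [IsProbabilityMeasure μ]
    (I : Fin N → Ω → ℝ)
    (hImeas : ∀ k, Measurable (I k))
    (hI01 : ∀ k ω, I k ω = 0 ∨ I k ω = 1)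
    (π : Fin N → ℝ)
    (hπ : ∀ k, π k = ∫ ω, I k ω ∂μ)
    (hπpos : ∀ k, 0 < π k) (hπle : ∀ k, π k ≤ 1)
    (n : ℝ) (hn : n = ∑ k, π k) (hn1 : 1 ≤ n)
    (π₂ : Fin N → Fin N → ℝ)
    (hπ₂ : ∀ k l, k ≠ l → π₂ k l = ∫ ω, I k ω * I l ω ∂μ)
    (a : ℝ) (ha : 0 ≤ a)
    (H4b : ∀ k l, k ≠ l → π₂ k l ≤ (1 + a / n) * (π k * π l))
    (y : Fin N → ℝ) (hy : ∀ k, 0 ≤ y k) :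
    variance (fun ω => ∑ k, (y k / π k) * I k ω) μ
      ≤ (N : ℝ) ^ 2 *
          (1 / (N * Finset.univ.inf' Finset.univ_nonempty π) + a / n)
        * ((1 / N) * ∑ k, y k ^ 2) := by
  have hNpos : (0:ℝ) < N := by
    exact_mod_cast Nat.pos_of_ne_zero (NeZero.ne N)
  set m : ℝ := Finset.univ.inf' Finset.univ_nonempty π with hm
  have hmpos : 0 < m := by
    obtain ⟨k, -, hk⟩ := Finset.exists_mem_eq_inf' (Finset.univ_nonempty) π
    rw [hm, hk]; exact hπpos k
  have hmle : ∀ k, m ≤ π k := fun k => Finset.inf'_le _ (Finset.mem_univ k)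
  have hnpos : 0 < n := lt_of_lt_of_le one_pos hn1
  set c : Fin N → ℝ := fun k => y k / π k with hc
  have hcnn : ∀ k, 0 ≤ c k := fun k => div_nonneg (hy k) (hπpos k).le
  -- integrability
  have hint : ∀ (f : Ω → ℝ), Measurable f → (∀ ω, f ω = 0 ∨ f ω = 1) →
      Integrable f μ := by
    intro f hf h01
    refine (MemLp.of_bound hf.aestronglyMeasurable 1 ?_).integrable le_rfl
    filter_upwards with ω
    rcases h01 ω with h | h <;> simp [h]
  have hintI : ∀ k, Integrable (I k) μ := fun k => hint _ (hImeas k) (hI01 k)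
  have hintII : ∀ k l, Integrable (fun ω => I k ω * I l ω) μ := by
    intro k l
    refine hint _ ((hImeas k).mul (hImeas l)) ?_
    intro ω
    rcases hI01 k ω with h | h <;> rcases hI01 l ω with h' | h' <;> simp [h, h']
  set X : Ω → ℝ := fun ω => ∑ k, c k * I k ω with hX
  have hXmem : MemLp X 2 μ := by
    refine MemLp.of_bound ?_ (∑ k, c k) ?_
    · exact (Finset.measurable_sum _ fun k _ => (hImeas k).const_mul _).aestronglyMeasurable
    · filter_upwards with ω
      rw [Real.norm_eq_abs, abs_le]
      constructor
      · refine le_trans ?_ (Finset.sum_nonneg fun k _ => by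
          rcases hI01 k ω with h | h <;>
            [simp [h]; simp [h, hcnn k]])
        simp [Finset.sum_nonneg fun k (_ : k ∈ Finset.univ) => hcnn k]
      · refine Finset.sum_le_sum fun k _ => ?_
        rcases hI01 k ω with h | h <;> simp [h, hcnn k]
  -- expectation
  have hEX : (∫ ω, X ω ∂μ) = ∑ k, y k := by
    rw [hX, integral_finset_sum _ fun k _ => (hintI k).const_mul _]
    refine Finset.sum_congr rfl fun k _ => ?_
    rw [integral_const_mul, ← hπ k, hc]
    exact div_mul_cancel₀ _ (hπpos k).ne'
  -- second moment
  have hEX2 : (∫ ω, X ω ^ 2 ∂μ)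
      = ∑ k, ∑ l, (c k * c l) * (∫ ω, I k ω * I l ω ∂μ) := by
    have hXsq : ∀ ω, X ω ^ 2 = ∑ k, ∑ l, (c k * c l) * (I k ω * I l ω) := by
      intro ω
      rw [hX, sq, Finset.sum_mul_sum]
      exact Finset.sum_congr rfl fun k _ => Finset.sum_congr rfl fun l _ => by ring
    simp_rw [hXsq]
    rw [integral_finset_sum _ fun k _ =>
      integrable_finset_sum _ fun l _ => (hintII k l).const_mul _]
    refine Finset.sum_congr rfl fun k _ => ?_
    rw [integral_finset_sum _ fun l _ => (hintII k l).const_mul _]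
    exact Finset.sum_congr rfl fun l _ => (integral_const_mul _ _)
  have hvar : variance X μ = (∫ ω, X ω ^ 2 ∂μ) - (∫ ω, X ω ∂μ) ^ 2 := by
    rw [variance_eq_sub hXmem]
    rfl
  -- diagonal integral
  have hdiag : ∀ k, (∫ ω, I k ω * I k ω ∂μ) = π k := by
    intro k
    rw [hπ k]
    refine integral_congr_ae (Filter.Eventually.of_forall fun ω => ?_)
    rcases hI01 k ω with h | h <;> simp [h]
  -- split sums
  have hsplit : (∫ ω, X ω ^ 2 ∂μ)
      = ∑ k, (c k * c k * π k)
        + ∑ k, ∑ l ∈ Finset.univ.erase k, (c k * c l) * π₂ k l := by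
    rw [hEX2, ← Finset.sum_add_distrib]
    refine Finset.sum_congr rfl fun k _ => ?_
    rw [← Finset.add_sum_erase _ _ (Finset.mem_univ k), hdiag k]
    congr 1
    refine Finset.sum_congr rfl fun l hl => ?_
    rw [hπ₂ k l (Ne.symm (Finset.ne_of_mem_erase hl))]
  have hck : ∀ k, c k * c k * π k = y k ^ 2 / π k := by
    intro k
    have h1 : c k * π k = y k := div_mul_cancel₀ _ (hπpos k).ne'
    calc c k * c k * π k = c k * (c k * π k) := by ring
      _ = y k / π k * y k := by rw [h1, hc]
      _ = y k ^ 2 / π k := by rw [div_mul_eq_mul_div, sq]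
  -- bound the off-diagonal
  have hoff : ∑ k, ∑ l ∈ Finset.univ.erase k, (c k * c l) * π₂ k l
      ≤ (1 + a / n) * ∑ k, ∑ l ∈ Finset.univ.erase k, y k * y l := by
    rw [Finset.mul_sum]
    refine Finset.sum_le_sum fun k _ => ?_
    rw [Finset.mul_sum]
    refine Finset.sum_le_sum fun l hl => ?_
    have hkl : k ≠ l := Ne.symm (Finset.ne_of_mem_erase hl)
    have h1 : (c k * c l) * π₂ k l ≤ (c k * c l) * ((1 + a / n) * (π k * π l)) :=
      mul_le_mul_of_nonneg_left (H4b k l hkl) (mul_nonneg (hcnn k) (hcnn l))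
    refine h1.trans_eq ?_
    have h2 : c k * π k = y k := div_mul_cancel₀ _ (hπpos k).ne'
    have h3 : c l * π l = y l := div_mul_cancel₀ _ (hπpos l).ne'
    calc c k * c l * ((1 + a / n) * (π k * π l))
        = (1 + a / n) * ((c k * π k) * (c l * π l)) := by ring
      _ = (1 + a / n) * (y k * y l) := by rw [h2, h3]
  -- key algebraic identity : S^2 = Q + O
  have hS2 : (∑ k, y k) ^ 2
      = (∑ k, y k ^ 2) + ∑ k, ∑ l ∈ Finset.univ.erase k, y k * y l := by
    rw [sq, Finset.sum_mul_sum, ← Finset.sum_add_distrib]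
    refine Finset.sum_congr rfl fun k _ => ?_
    rw [← Finset.add_sum_erase _ _ (Finset.mem_univ k), sq]
  set Q : ℝ := ∑ k, y k ^ 2 with hQ
  set O : ℝ := ∑ k, ∑ l ∈ Finset.univ.erase k, y k * y l with hO
  have hQnn : 0 ≤ Q := Finset.sum_nonneg fun k _ => sq_nonneg _
  have hOnn : 0 ≤ O :=
    Finset.sum_nonneg fun k _ => Finset.sum_nonneg fun l _ =>
      mul_nonneg (hy k) (hy l)
  have hOle : O ≤ (N : ℝ) * Q := by
    have hCS : (∑ k, y k) ^ 2 ≤ ((Finset.univ : Finset (Fin N)).card : ℝ) * ∑ k, y k ^ 2 := by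
      exact_mod_cast sq_sum_le_card_mul_sum_sq (s := (Finset.univ : Finset (Fin N))) (f := y)
    have : O = (∑ k, y k) ^ 2 - Q := by rw [hS2]; ring
    rw [this]
    simp only [Finset.card_univ, Fintype.card_fin] at hCS
    linarith
  have hdiagle : ∑ k, y k ^ 2 / π k ≤ Q / m := by
    rw [hQ, Finset.sum_div]
    refine Finset.sum_le_sum fun k _ => ?_
    exact div_le_div_of_nonneg_left (sq_nonneg _) hmpos (hmle k)
  -- put everything together
  have hvarle : variance X μ ≤ Q / m + a / n * ((N:ℝ) * Q) := by
    rw [hvar, hsplit, hEX, hS2]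
    have h1 : ∑ k, (c k * c k * π k) = ∑ k, y k ^ 2 / π k :=
      Finset.sum_congr rfl fun k _ => hck k
    rw [h1]
    have han : 0 ≤ a / n := div_nonneg ha hnpos.le
    have h2 : a / n * O ≤ a / n * ((N:ℝ) * Q) := mul_le_mul_of_nonneg_left hOle han
    have := hdiagle
    nlinarith [hoff, hQnn]
  have hRHS : (N : ℝ) ^ 2 * (1 / (N * m) + a / n) * ((1 / N) * Q)
      = Q / m + a / n * ((N:ℝ) * Q) := by
    field_simp
  calc variance X μ ≤ Q / m + a / n * ((N:ℝ) * Q) := hvarle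
    _ = _ := hRHS.symm
end

section
/- (Proposition 2 of the paper.) Consider a sequence indexed by t ∈ ℕ of without-replacement sampling designs on finite populations U_t of size N_t with N_t → ∞, with inclusion probabilities π_{k,t}, average sample sizes n_t = Σ_{k∈U_t} π_{k,t}, and nonnegative variables y_t : U_t → [0,∞) with totals t_{y,t}. Assume: (H1) n_t/N_t → f for some f ∈ (0,1); (H2) there exists λ₁ > 0 with min_{k∈U_t} π_{k,t} ≥ λ₁ for all t; (H3) there exists C₁ with (1/N_t) Σ_{k∈U_t} y_{k,t}² ≤ C₁ for all t; (H4b) there exists a ≥ 0 such that for all t and all k ≠ l ∈ U_t, π_{kl,t} ≤ (1 + a/n_t) π_{k,t} π_{l,t}. Then E[ (N_t^{-1}(t̂_{yπ,t} − t_{y,t}))² ] = O(n_t^{-1}), i.e. there exist a constant K and t₀ such that for all t ≥ t₀, E[ (N_t^{-1}(t̂_{yπ,t} − t_{y,t}))² ] ≤ K / n_t. -/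
open MeasureTheory ProbabilityTheory Finset Filter

/-- Proposition 2: under (H1)–(H3) and (H4b), for nonnegative variables `y_t`,
the Narain–Horvitz–Thompson estimator is mean-square consistent, with
`E[(N_t⁻¹(t̂_{yπ,t} − t_{y,t}))²] = O(n_t⁻¹)`. -/
theorem ht_mean_square_consistency_prop2
    (N : ℕ → ℕ) (hNpos : ∀ t, 1 ≤ N t)
    (hNinf : Tendsto (fun t => (N t : ℝ)) atTop atTop)
    (Ω : ℕ → Type*) [∀ t, MeasurableSpace (Ω t)]
    (μ : ∀ t, Measure (Ω t)) [∀ t, IsProbabilityMeasure (μ t)]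
    (I : ∀ t, Fin (N t) → Ω t → ℝ)
    (hImeas : ∀ t k, Measurable (I t k))
    (hI01 : ∀ t k ω, I t k ω = 0 ∨ I t k ω = 1)
    (π : ∀ t, Fin (N t) → ℝ)
    (hπ : ∀ t k, π t k = ∫ ω, I t k ω ∂(μ t))
    (hπpos : ∀ t k, 0 < π t k) (hπle : ∀ t k, π t k ≤ 1)
    (π₂ : ∀ t, Fin (N t) → Fin (N t) → ℝ)
    (hπ₂ : ∀ t k l, k ≠ l → π₂ t k l = ∫ ω, I t k ω * I t l ω ∂(μ t))
    (y : ∀ t, Fin (N t) → ℝ) (hy : ∀ t k, 0 ≤ y t k)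
    (n : ℕ → ℝ) (hn : ∀ t, n t = ∑ k, π t k)
    -- (H1)
    (f : ℝ) (hf : f ∈ Set.Ioo (0 : ℝ) 1)
    (H1 : Tendsto (fun t => n t / N t) atTop (nhds f))
    -- (H2)
    (lam₁ : ℝ) (hlam₁ : 0 < lam₁) (H2 : ∀ t k, lam₁ ≤ π t k)
    -- (H3)
    (C₁ : ℝ) (H3 : ∀ t, (1 / (N t : ℝ)) * ∑ k, y t k ^ 2 ≤ C₁)
    -- (H4b)
    (a : ℝ) (ha : 0 ≤ a)
    (H4b : ∀ t, ∀ k l : Fin (N t), k ≠ l →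
            π₂ t k l ≤ (1 + a / n t) * (π t k * π t l)) :
    ∃ K : ℝ, ∃ t₀ : ℕ, ∀ t ≥ t₀,
      (∫ ω, ((N t : ℝ)⁻¹ * ((∑ k, (y t k / π t k) * I t k ω) - ∑ k, y t k)) ^ 2
          ∂(μ t)) ≤ K / n t := by
  refine ⟨C₁ / lam₁ + a * C₁, 0, fun t _ => ?_⟩
  have hNr : (1 : ℝ) ≤ (N t : ℝ) := by exact_mod_cast hNpos t
  have hNrpos : (0 : ℝ) < (N t : ℝ) := lt_of_lt_of_le one_pos hNr
  have hnpos : 0 < n t := by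
    rw [hn t]
    have : (0:ℝ) < ∑ _k : Fin (N t), lam₁ := by
      rw [Finset.sum_const, Finset.card_univ, Fintype.card_fin]
      have : (0:ℝ) < (N t : ℝ) * lam₁ := by positivity
      simpa [nsmul_eq_mul] using this
    exact lt_of_lt_of_le this (Finset.sum_le_sum fun k _ => H2 t k)
  have hnleN : n t ≤ (N t : ℝ) := by
    rw [hn t]
    calc ∑ k, π t k ≤ ∑ _k : Fin (N t), (1:ℝ) :=
          Finset.sum_le_sum fun k _ => hπle t k
      _ = (N t : ℝ) := by simp
  have hC₁ : 0 ≤ C₁ := by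
    refine le_trans ?_ (H3 t)
    have : (0:ℝ) ≤ ∑ k, y t k ^ 2 := Finset.sum_nonneg fun k _ => sq_nonneg _
    positivity
  -- abbreviations
  set c : Fin (N t) → ℝ := fun k => y t k / π t k with hc
  have hcπ : ∀ k, c k * π t k = y t k := fun k =>
    div_mul_cancel₀ _ (hπpos t k).ne'
  have hcnn : ∀ k, 0 ≤ c k := fun k => div_nonneg (hy t k) (hπpos t k).le
  -- integrability facts
  have hIbd : ∀ k ω, ‖I t k ω‖ ≤ 1 := by
    intro k ω; rcases hI01 t k ω with h | h <;> simp [h]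
  have hint : ∀ k, Integrable (I t k) (μ t) := by
    intro k
    exact (integrable_const (1:ℝ)).mono' (hImeas t k).aestronglyMeasurable
      (ae_of_all _ fun ω => hIbd k ω)
  have hint2 : ∀ k l, Integrable (fun ω => I t k ω * I t l ω) (μ t) := by
    intro k l
    refine (integrable_const (1:ℝ)).mono'
      ((hImeas t k).mul (hImeas t l)).aestronglyMeasurable (ae_of_all _ fun ω => ?_)
    rw [norm_mul]
    calc ‖I t k ω‖ * ‖I t l ω‖ ≤ 1 * 1 :=
          mul_le_mul (hIbd k ω) (hIbd l ω) (norm_nonneg _) zero_le_one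
      _ = 1 := by ring
  have covint : ∀ k l, Integrable
      (fun ω => (I t k ω - π t k) * (I t l ω - π t l)) (μ t) := by
    intro k l
    have h : (fun ω => (I t k ω - π t k) * (I t l ω - π t l)) =
        fun ω => I t k ω * I t l ω - π t k * I t l ω - π t l * I t k ω
          + π t k * π t l := by funext ω; ring
    rw [h]
    exact (((hint2 k l).sub ((hint l).const_mul _)).sub
      ((hint k).const_mul _)).add (integrable_const _)
  have cov_eq : ∀ k l, (∫ ω, (I t k ω - π t k) * (I t l ω - π t l) ∂(μ t)) =
      (∫ ω, I t k ω * I t l ω ∂(μ t)) - π t k * π t l := by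
    intro k l
    have h2' : Integrable (fun ω => π t k * I t l ω + π t l * I t k ω) (μ t) :=
      ((hint l).const_mul _).add ((hint k).const_mul _)
    have h2 : Integrable
        (fun ω => π t k * I t l ω + π t l * I t k ω - π t k * π t l) (μ t) :=
      h2'.sub (integrable_const _)
    have e2 : (∫ ω, π t k * I t l ω + π t l * I t k ω - π t k * π t l ∂(μ t)) =
        π t k * π t l := by
      rw [integral_sub h2' (integrable_const _),
        integral_add ((hint l).const_mul _) ((hint k).const_mul _),
        integral_const_mul, integral_const_mul, integral_const, ← hπ t k, ← hπ t l]
      simp [measure_univ]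
      ring
    calc (∫ ω, (I t k ω - π t k) * (I t l ω - π t l) ∂(μ t))
        = ∫ ω, I t k ω * I t l ω -
            (π t k * I t l ω + π t l * I t k ω - π t k * π t l) ∂(μ t) := by
          refine integral_congr_ae (ae_of_all _ fun ω => ?_); ring
      _ = (∫ ω, I t k ω * I t l ω ∂(μ t)) -
            ∫ ω, π t k * I t l ω + π t l * I t k ω - π t k * π t l ∂(μ t) :=
          integral_sub (hint2 k l) h2
      _ = (∫ ω, I t k ω * I t l ω ∂(μ t)) - π t k * π t l := by rw [e2]
  -- expectation of I_k * I_k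
  have hII : ∀ k, (∫ ω, I t k ω * I t k ω ∂(μ t)) = π t k := by
    intro k
    have : (fun ω => I t k ω * I t k ω) = I t k := by
      funext ω; rcases hI01 t k ω with h | h <;> simp [h]
    rw [this, ← hπ t k]
  -- pointwise expansion of the square
  have key : ∀ ω, ((∑ k, c k * I t k ω) - ∑ k, y t k) ^ 2 =
      ∑ k, ∑ l, c k * c l * ((I t k ω - π t k) * (I t l ω - π t l)) := by
    intro ω
    have h1 : (∑ k, c k * I t k ω) - ∑ k, y t k =
        ∑ k, c k * (I t k ω - π t k) := by
      rw [← Finset.sum_sub_distrib]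
      refine Finset.sum_congr rfl fun k _ => ?_
      rw [mul_sub, hcπ k]
    rw [h1, sq, Finset.sum_mul_sum]
    exact Finset.sum_congr rfl fun k _ => Finset.sum_congr rfl fun l _ => by ring
  -- compute the integral
  have hintegrand : ∀ k l, Integrable
      (fun ω => c k * c l * ((I t k ω - π t k) * (I t l ω - π t l))) (μ t) :=
    fun k l => (covint k l).const_mul _
  have hsum_int : (∫ ω, ((N t : ℝ)⁻¹ *
        ((∑ k, (y t k / π t k) * I t k ω) - ∑ k, y t k)) ^ 2 ∂(μ t)) =
      ((N t : ℝ)⁻¹) ^ 2 * ∑ k, ∑ l, c k * c l *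
        ((∫ ω, I t k ω * I t l ω ∂(μ t)) - π t k * π t l) := by
    have h0 : (fun ω => ((N t : ℝ)⁻¹ *
        ((∑ k, (y t k / π t k) * I t k ω) - ∑ k, y t k)) ^ 2) =
        fun ω => ((N t : ℝ)⁻¹) ^ 2 *
          ∑ k, ∑ l, c k * c l * ((I t k ω - π t k) * (I t l ω - π t l)) := by
      funext ω
      rw [mul_pow, ← key ω]
    rw [h0, integral_const_mul]
    congr 1
    rw [integral_finset_sum _ (fun k _ => integrable_finset_sum _
      (fun l _ => hintegrand k l))]
    refine Finset.sum_congr rfl fun k _ => ?_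
    rw [integral_finset_sum _ (fun l _ => hintegrand k l)]
    refine Finset.sum_congr rfl fun l _ => ?_
    rw [integral_const_mul, cov_eq k l]
  rw [hsum_int]
  -- bound the double sum
  have hdiag : ∀ k : Fin (N t), c k * c k *
      ((∫ ω, I t k ω * I t k ω ∂(μ t)) - π t k * π t k) ≤ y t k ^ 2 / lam₁ := by
    intro k
    rw [hII k]
    have hpk := hπpos t k
    have h1 : c k * c k * (π t k - π t k * π t k) =
        y t k ^ 2 * ((1 - π t k) / π t k) := by
      rw [hc]; field_simp
    rw [h1]
    have h2 : (1 - π t k) / π t k ≤ 1 / lam₁ :=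
      div_le_div₀ zero_le_one (by linarith [hπpos t k]) hlam₁ (H2 t k)
    calc y t k ^ 2 * ((1 - π t k) / π t k) ≤ y t k ^ 2 * (1 / lam₁) :=
          mul_le_mul_of_nonneg_left h2 (sq_nonneg _)
      _ = y t k ^ 2 / lam₁ := by ring
  have hoff : ∀ k l : Fin (N t), k ≠ l → c k * c l *
      ((∫ ω, I t k ω * I t l ω ∂(μ t)) - π t k * π t l) ≤
        (a / n t) * (y t k * y t l) := by
    intro k l hkl
    rw [← hπ₂ t k l hkl]
    have h1 : π₂ t k l - π t k * π t l ≤ (a / n t) * (π t k * π t l) := by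
      have := H4b t k l hkl; nlinarith [this]
    calc c k * c l * (π₂ t k l - π t k * π t l) ≤
          c k * c l * ((a / n t) * (π t k * π t l)) :=
          mul_le_mul_of_nonneg_left h1 (mul_nonneg (hcnn k) (hcnn l))
      _ = (a / n t) * ((c k * π t k) * (c l * π t l)) := by ring
      _ = (a / n t) * (y t k * y t l) := by rw [hcπ k, hcπ l]
  -- total bound on the double sum
  have hsum_bound : (∑ k, ∑ l, c k * c l *
        ((∫ ω, I t k ω * I t l ω ∂(μ t)) - π t k * π t l)) ≤
      (∑ k, y t k ^ 2) / lam₁ + (a / n t) * (∑ k, y t k) ^ 2 := by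
    have hsplit : ∀ k : Fin (N t), (∑ l, c k * c l *
          ((∫ ω, I t k ω * I t l ω ∂(μ t)) - π t k * π t l)) ≤
        y t k ^ 2 / lam₁ + (a / n t) * ∑ l, y t k * y t l := by
      intro k
      rw [← Finset.sum_erase_add _ _ (Finset.mem_univ k)]
      have hb1 : (∑ l ∈ Finset.univ.erase k, c k * c l *
            ((∫ ω, I t k ω * I t l ω ∂(μ t)) - π t k * π t l)) ≤
          (a / n t) * ∑ l, y t k * y t l := by
        calc (∑ l ∈ Finset.univ.erase k, c k * c l *
              ((∫ ω, I t k ω * I t l ω ∂(μ t)) - π t k * π t l)) ≤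
            ∑ l ∈ Finset.univ.erase k, (a / n t) * (y t k * y t l) :=
              Finset.sum_le_sum fun l hl =>
                hoff k l (Ne.symm (Finset.mem_erase.mp hl).1)
          _ ≤ ∑ l, (a / n t) * (y t k * y t l) := by
              refine Finset.sum_le_sum_of_subset_of_nonneg
                (Finset.erase_subset _ _) fun l _ _ => ?_
              exact mul_nonneg (div_nonneg ha hnpos.le)
                (mul_nonneg (hy t k) (hy t l))
          _ = (a / n t) * ∑ l, y t k * y t l := by rw [Finset.mul_sum]
      linarith [hdiag k, hb1]
    calc (∑ k, ∑ l, c k * c l *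
          ((∫ ω, I t k ω * I t l ω ∂(μ t)) - π t k * π t l)) ≤
        ∑ k, (y t k ^ 2 / lam₁ + (a / n t) * ∑ l, y t k * y t l) :=
          Finset.sum_le_sum fun k _ => hsplit k
      _ = (∑ k, y t k ^ 2) / lam₁ + (a / n t) * (∑ k, y t k) ^ 2 := by
          rw [Finset.sum_add_distrib, ← Finset.sum_div, ← Finset.mul_sum]
          congr 1
          rw [sq, Finset.sum_mul_sum]
    -- done
  -- final arithmetic
  have hy2 : (∑ k, y t k ^ 2) ≤ (N t : ℝ) * C₁ := by
    have h := H3 t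
    rw [div_mul_eq_mul_div, one_mul, div_le_iff₀ hNrpos] at h
    linarith
  have hCS : (∑ k, y t k) ^ 2 ≤ (N t : ℝ) * ∑ k, y t k ^ 2 := by
    have := sq_sum_le_card_mul_sum_sq (s := (Finset.univ : Finset (Fin (N t))))
      (f := y t)
    simpa using this
  have hsq2 : (∑ k, y t k) ^ 2 ≤ (N t : ℝ) ^ 2 * C₁ := by
    calc (∑ k, y t k) ^ 2 ≤ (N t : ℝ) * ∑ k, y t k ^ 2 := hCS
      _ ≤ (N t : ℝ) * ((N t : ℝ) * C₁) :=
          mul_le_mul_of_nonneg_left hy2 hNrpos.le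
      _ = (N t : ℝ) ^ 2 * C₁ := by ring
  have hfinal : ((N t : ℝ)⁻¹) ^ 2 *
      ((∑ k, y t k ^ 2) / lam₁ + (a / n t) * (∑ k, y t k) ^ 2) ≤
      (C₁ / lam₁ + a * C₁) / n t := by
    have h1 : ((N t : ℝ)⁻¹) ^ 2 * ((∑ k, y t k ^ 2) / lam₁) ≤ C₁ / lam₁ / n t := by
      rw [div_div, le_div_iff₀ (by positivity)]
      have e : ((N t : ℝ)⁻¹) ^ 2 * ((∑ k, y t k ^ 2) / lam₁) * (lam₁ * n t) =
          (∑ k, y t k ^ 2) * n t / (N t : ℝ) ^ 2 := by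
        field_simp
      rw [e, div_le_iff₀ (by positivity)]
      have hsnn : (0:ℝ) ≤ ∑ k, y t k ^ 2 :=
        Finset.sum_nonneg fun k _ => sq_nonneg _
      nlinarith [mul_le_mul hy2 hnleN hnpos.le
        (by positivity : (0:ℝ) ≤ (N t : ℝ) * C₁)]
    have h2 : ((N t : ℝ)⁻¹) ^ 2 * ((a / n t) * (∑ k, y t k) ^ 2) ≤
        a * C₁ / n t := by
      calc ((N t : ℝ)⁻¹) ^ 2 * ((a / n t) * (∑ k, y t k) ^ 2) ≤
          ((N t : ℝ)⁻¹) ^ 2 * ((a / n t) * ((N t : ℝ) ^ 2 * C₁)) := by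
            apply mul_le_mul_of_nonneg_left _ (by positivity)
            exact mul_le_mul_of_nonneg_left hsq2 (by positivity)
        _ = a * C₁ / n t := by field_simp
    calc ((N t : ℝ)⁻¹) ^ 2 *
        ((∑ k, y t k ^ 2) / lam₁ + (a / n t) * (∑ k, y t k) ^ 2)
        = ((N t : ℝ)⁻¹) ^ 2 * ((∑ k, y t k ^ 2) / lam₁) +
          ((N t : ℝ)⁻¹) ^ 2 * ((a / n t) * (∑ k, y t k) ^ 2) := by ring
      _ ≤ C₁ / lam₁ / n t + a * C₁ / n t := add_le_add h1 h2
      _ = (C₁ / lam₁ + a * C₁) / n t := by rw [← add_div]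
  refine le_trans ?_ hfinal
  exact mul_le_mul_of_nonneg_left hsum_bound (by positivity)
end

section
/- (Proposition 3 of the paper.) Consider a sequence indexed by t ∈ ℕ of without-replacement sampling designs on finite populations U_t of size N_t with N_t → ∞, with inclusion probabilities π_{k,t}, average sample sizes n_t = Σ_{k∈U_t} π_{k,t}, variables y_t and totals t_{y,t}. Assume: (H1) n_t/N_t → f for some f ∈ (0,1); (H2) there exists λ₁ > 0 with min_{k∈U_t} π_{k,t} ≥ λ₁ for all t; (H3) there exists C₁ with (1/N_t) Σ_{k∈U_t} y_{k,t}² ≤ C₁ for all t; (H4c) for each t, Var(t̂_{yπ,t}) ≤ Σ_{k∈U_t} π_{k,t} (y_{k,t}/π_{k,t} − t_{y,t}/n_t)², i.e. the variance of the Narain–Horvitz–Thompson estimator is no greater than the variance of the Hansen–Hurwitz estimator under multinomial sampling with parameter π_t. Then E[ (N_t^{-1}(t̂_{yπ,t} − t_{y,t}))² ] = O(n_t^{-1}), i.e. there exist a constant K and t₀ such that for all t ≥ t₀, E[ (N_t^{-1}(t̂_{yπ,t} − t_{y,t}))² ] ≤ K / n_t. -/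
open MeasureTheory ProbabilityTheory Finset Filter

/-- Proposition 3: under (H1)–(H3) and (H4c) (the variance of the
Narain–Horvitz–Thompson estimator is bounded by the Hansen–Hurwitz variance
under multinomial sampling), the Narain–Horvitz–Thompson estimator is
mean-square consistent, with `E[(N_t⁻¹(t̂_{yπ,t} − t_{y,t}))²] = O(n_t⁻¹)`. -/
theorem ht_mean_square_consistency_prop3
    (N : ℕ → ℕ) (hNpos : ∀ t, 1 ≤ N t)
    (hNinf : Tendsto (fun t => (N t : ℝ)) atTop atTop)
    (Ω : ℕ → Type*) [∀ t, MeasurableSpace (Ω t)]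
    (μ : ∀ t, Measure (Ω t)) [∀ t, IsProbabilityMeasure (μ t)]
    (I : ∀ t, Fin (N t) → Ω t → ℝ)
    (hImeas : ∀ t k, Measurable (I t k))
    (hI01 : ∀ t k ω, I t k ω = 0 ∨ I t k ω = 1)
    (π : ∀ t, Fin (N t) → ℝ)
    (hπ : ∀ t k, π t k = ∫ ω, I t k ω ∂(μ t))
    (hπpos : ∀ t k, 0 < π t k) (hπle : ∀ t k, π t k ≤ 1)
    (y : ∀ t, Fin (N t) → ℝ)
    (n : ℕ → ℝ) (hn : ∀ t, n t = ∑ k, π t k)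
    -- (H1)
    (f : ℝ) (hf : f ∈ Set.Ioo (0 : ℝ) 1)
    (H1 : Tendsto (fun t => n t / N t) atTop (nhds f))
    -- (H2)
    (lam₁ : ℝ) (hlam₁ : 0 < lam₁) (H2 : ∀ t k, lam₁ ≤ π t k)
    -- (H3)
    (C₁ : ℝ) (H3 : ∀ t, (1 / (N t : ℝ)) * ∑ k, y t k ^ 2 ≤ C₁)
    -- (H4c)
    (H4c : ∀ t, variance (fun ω => ∑ k, (y t k / π t k) * I t k ω) (μ t)
            ≤ ∑ k, π t k * (y t k / π t k - (∑ l, y t l) / n t) ^ 2) :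
    ∃ K : ℝ, ∃ t₀ : ℕ, ∀ t ≥ t₀,
      (∫ ω, ((N t : ℝ)⁻¹ * ((∑ k, (y t k / π t k) * I t k ω) - ∑ k, y t k)) ^ 2
          ∂(μ t)) ≤ K / n t := by
  have hC₁ : 0 ≤ C₁ := le_trans (by positivity) (H3 0)
  -- eventually n t / N t < f + 1
  have hev : ∀ᶠ t in atTop, n t / (N t : ℝ) < f + 1 :=
    H1.eventually_lt_const (by linarith [hf.1])
  obtain ⟨t₀, ht₀⟩ := eventually_atTop.mp hev
  refine ⟨2 * C₁ * (f + 1) / lam₁ + 2 * C₁, t₀, fun t ht => ?_⟩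
  have hNt : (0 : ℝ) < N t := by exact_mod_cast hNpos t
  have hnt : (N t : ℝ) * lam₁ ≤ n t := by
    rw [hn t]
    calc (N t : ℝ) * lam₁ = ∑ _k : Fin (N t), lam₁ := by
          simp [mul_comm]
      _ ≤ ∑ k, π t k := Finset.sum_le_sum fun k _ => H2 t k
  have hnpos : 0 < n t := lt_of_lt_of_le (by positivity) hnt
  set S : Ω t → ℝ := fun ω => ∑ k, (y t k / π t k) * I t k ω with hS
  set T : ℝ := ∑ k, y t k with hT
  -- integrability of each indicator
  have hIint : ∀ k, Integrable (I t k) (μ t) := fun k => by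
    refine memLp_one_iff_integrable.mp
      (MemLp.of_bound (hImeas t k).aestronglyMeasurable 1 (ae_of_all _ fun ω => ?_))
    rcases hI01 t k ω with h | h <;> simp [h]
  -- expectation
  have hES : ∫ ω, S ω ∂(μ t) = T := by
    rw [hS]
    rw [integral_finset_sum _ (fun k _ => (hIint k).const_mul _)]
    refine Finset.sum_congr rfl fun k _ => ?_
    rw [integral_const_mul, ← hπ t k,
      div_mul_cancel₀ _ (hπpos t k).ne']
  -- S is in L²
  have hSmeas : Measurable S :=
    Finset.measurable_sum _ fun k _ => (hImeas t k).const_mul _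
  have hS2 : MemLp S 2 (μ t) := by
    refine MemLp.of_bound hSmeas.aestronglyMeasurable (∑ k, |y t k / π t k|)
      (ae_of_all _ fun ω => ?_)
    calc ‖S ω‖ ≤ ∑ k, ‖(y t k / π t k) * I t k ω‖ := norm_sum_le _ _
      _ ≤ ∑ k, |y t k / π t k| := by
          refine Finset.sum_le_sum fun k _ => ?_
          rw [Real.norm_eq_abs, abs_mul]
          rcases hI01 t k ω with h | h <;> simp [h]
  -- variance identity
  have hvar : variance S (μ t) = ∫ ω, (S ω - T) ^ 2 ∂(μ t) := by
    rw [variance_eq_integral hSmeas.aemeasurable, hES]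
  -- rewrite LHS
  have hLHS : (∫ ω, ((N t : ℝ)⁻¹ * (S ω - T)) ^ 2 ∂(μ t))
      = ((N t : ℝ)⁻¹) ^ 2 * variance S (μ t) := by
    rw [hvar]
    simp_rw [mul_pow]
    rw [integral_const_mul]
  -- bound Hansen–Hurwitz variance
  have hSY : ∑ k, y t k ^ 2 ≤ (N t : ℝ) * C₁ := by
    have := H3 t
    rw [one_div, inv_mul_le_iff₀ hNt] at this
    linarith [this]
  have hT2 : T ^ 2 ≤ (N t : ℝ) ^ 2 * C₁ := by
    have h1 : T ^ 2 ≤ (N t : ℝ) * ∑ k, y t k ^ 2 := by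
      have := sq_sum_le_card_mul_sum_sq (s := (Finset.univ : Finset (Fin (N t))))
        (f := y t)
      simpa using this
    calc T ^ 2 ≤ (N t : ℝ) * ((N t : ℝ) * C₁) :=
          h1.trans (by exact mul_le_mul_of_nonneg_left hSY hNt.le)
      _ = (N t : ℝ) ^ 2 * C₁ := by ring
  have hHH : ∑ k, π t k * (y t k / π t k - T / n t) ^ 2
      ≤ 2 * ((N t : ℝ) * C₁) / lam₁ + 2 * T ^ 2 / n t := by
    have step : ∑ k, π t k * (y t k / π t k - T / n t) ^ 2
        ≤ ∑ k, (2 * (y t k ^ 2 / π t k) + 2 * π t k * (T / n t) ^ 2) := by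
      refine Finset.sum_le_sum fun k _ => ?_
      have hπk := hπpos t k
      have key : π t k * (y t k / π t k - T / n t) ^ 2
          ≤ 2 * π t k * (y t k / π t k) ^ 2 + 2 * π t k * (T / n t) ^ 2 := by
        have h2 : (y t k / π t k - T / n t) ^ 2
            ≤ 2 * (y t k / π t k) ^ 2 + 2 * (T / n t) ^ 2 := by nlinarith [sq_nonneg (y t k / π t k + T / n t)]
        nlinarith [hπk.le, sq_nonneg (y t k / π t k - T / n t)]
      have heq : 2 * π t k * (y t k / π t k) ^ 2 = 2 * (y t k ^ 2 / π t k) := by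
        field_simp
      linarith [key, heq.le]
    rw [Finset.sum_add_distrib] at step
    have h1 : ∑ k, 2 * (y t k ^ 2 / π t k) ≤ 2 * ((N t : ℝ) * C₁) / lam₁ := by
      have hle : ∑ k, 2 * (y t k ^ 2 / π t k) ≤ ∑ k, 2 * (y t k ^ 2 / lam₁) := by
        refine Finset.sum_le_sum fun k _ => ?_
        have := div_le_div_of_nonneg_left (sq_nonneg (y t k)) hlam₁ (H2 t k)
        linarith
      have : ∑ k, 2 * (y t k ^ 2 / lam₁) = 2 * (∑ k, y t k ^ 2) / lam₁ := by
        rw [Finset.mul_sum, Finset.sum_div]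
        exact Finset.sum_congr rfl fun k _ => by ring
      rw [this] at hle
      refine hle.trans ?_
      have := div_le_div_of_nonneg_right (c := lam₁) (by linarith [hSY] : 2 * (∑ k, y t k ^ 2) ≤ 2 * ((N t : ℝ) * C₁)) hlam₁.le
      exact this
    have h2 : ∑ k, 2 * π t k * (T / n t) ^ 2 = 2 * T ^ 2 / n t := by
      have : ∑ k, 2 * π t k * (T / n t) ^ 2 = (∑ k, π t k) * (2 * (T / n t) ^ 2) := by
        rw [Finset.sum_mul]
        refine Finset.sum_congr rfl fun k _ => by ring
      rw [this, ← hn t]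
      field_simp
    rw [h2] at step
    linarith
  -- conclude
  have hvarle : variance S (μ t) ≤ 2 * ((N t : ℝ) * C₁) / lam₁ + 2 * ((N t : ℝ) ^ 2 * C₁) / n t := by
    refine (H4c t).trans (hHH.trans ?_)
    have : 2 * T ^ 2 / n t ≤ 2 * ((N t : ℝ) ^ 2 * C₁) / n t :=
      div_le_div_of_nonneg_right (by linarith [hT2]) hnpos.le
    linarith
  have hmain : (∫ ω, ((N t : ℝ)⁻¹ * (S ω - T)) ^ 2 ∂(μ t))
      ≤ (2 * C₁ * (f + 1) / lam₁ + 2 * C₁) / n t := by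
    rw [hLHS]
    have hNn : n t ≤ (f + 1) * (N t : ℝ) := by
      have := ht₀ t ht
      rw [div_lt_iff₀ hNt] at this
      linarith
    have hstep : ((N t : ℝ)⁻¹) ^ 2 * variance S (μ t)
        ≤ ((N t : ℝ)⁻¹) ^ 2 * (2 * ((N t : ℝ) * C₁) / lam₁ + 2 * ((N t : ℝ) ^ 2 * C₁) / n t) :=
      mul_le_mul_of_nonneg_left hvarle (by positivity)
    refine hstep.trans ?_
    have hNe : (N t : ℝ) ≠ 0 := hNt.ne'
    have hne : n t ≠ 0 := hnpos.ne'
    have heq : ((N t : ℝ)⁻¹) ^ 2 * (2 * ((N t : ℝ) * C₁) / lam₁ + 2 * ((N t : ℝ) ^ 2 * C₁) / n t)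
        = 2 * C₁ / (lam₁ * (N t : ℝ)) + 2 * C₁ / n t := by
      field_simp
    rw [heq]
    have hkey : 2 * C₁ / (lam₁ * (N t : ℝ)) ≤ 2 * C₁ * (f + 1) / lam₁ / n t := by
      rw [div_le_div_iff₀ (by positivity) hnpos]
      have : 2 * C₁ * n t ≤ 2 * C₁ * ((f + 1) * (N t : ℝ)) :=
        mul_le_mul_of_nonneg_left hNn (by linarith)
      have hr : 2 * C₁ * (f + 1) / lam₁ * (lam₁ * (N t : ℝ))
          = 2 * C₁ * ((f + 1) * (N t : ℝ)) := by
        field_simp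
      linarith [this, hr]
    rw [add_div]
    linarith
  exact hmain
end

section
/- Let (M_i)_{i∈ℕ} be a [0,1]^N-valued martingale with M_0 = π ∈ (0,1]^N deterministic, and let T be a stopping time with E[T] < ∞ such that almost surely M_i = M_T for all i ≥ T and M_T takes values in {0,1}^N; write I = M_T (so E[I_k] = π_k for each k). Suppose there is a constant C such that almost surely, for every i, the number of coordinates k with M_{i+1,k} ≠ M_{i,k} is at most C. Then for any y : {1,…,N} → ℝ, the estimator t̂_y = Σ_{k=1}^N (y_k/π_k) I_k satisfies Var(t̂_y) ≤ ( max_{k} |y_k| / min_{k} π_k )² × C² × E[T]. -/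
open MeasureTheory ProbabilityTheory Finset

/-- For a martingale sampling algorithm (a `[0,1]^N`-valued martingale with
deterministic initial value `π ∈ (0,1]^N`, stopped at an integrable stopping
time `T` at a `{0,1}^N`-valued vector `I` of indicators), if at most `C`
coordinates change at each step, then
`Var(t̂_y) ≤ (max_k |y_k| / min_k π_k)² C² E[T]`. -/
theorem martingale_sampling_variance_bound
    (N : ℕ) [NeZero N]
    (Ω : Type*) (m : MeasurableSpace Ω) (μ : Measure Ω) [IsProbabilityMeasure μ]
    (ℱ : Filtration ℕ m)
    (M : ℕ → Ω → (Fin N → ℝ))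
    (hM : Martingale M ℱ μ)
    (hM01 : ∀ i ω k, M i ω k ∈ Set.Icc (0 : ℝ) 1)
    (π : Fin N → ℝ)
    (hπ : ∀ k, π k ∈ Set.Ioc (0 : ℝ) 1)
    (hM0 : ∀ᵐ ω ∂μ, M 0 ω = π)
    (T : Ω → ℕ)
    (hT : IsStoppingTime ℱ (fun ω => (T ω : WithTop ℕ)))
    (hTint : Integrable (fun ω => (T ω : ℝ)) μ)
    (hstop : ∀ᵐ ω ∂μ, ∀ i, T ω ≤ i → M i ω = M (T ω) ω)
    (hfinal : ∀ᵐ ω ∂μ, ∀ k, M (T ω) ω k = 0 ∨ M (T ω) ω k = 1)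
    (C : ℕ)
    (hC : ∀ᵐ ω ∂μ, ∀ i,
      (Finset.univ.filter (fun k => M (i+1) ω k ≠ M i ω k)).card ≤ C)
    (y : Fin N → ℝ) :
    variance (fun ω => ∑ k, (y k / π k) * M (T ω) ω k) μ
      ≤ (Finset.univ.sup' Finset.univ_nonempty (fun k => |y k|)
          / Finset.univ.inf' Finset.univ_nonempty π) ^ 2
        * (C : ℝ) ^ 2 * ∫ ω, (T ω : ℝ) ∂μ := by
  classical
  set Ky := Finset.univ.sup' Finset.univ_nonempty (fun k => |y k|) with hKy_def
  set Kp := Finset.univ.inf' Finset.univ_nonempty π with hKp_def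
  set K := Ky / Kp with hK_def
  have hKp : 0 < Kp := by
    rw [hKp_def, Finset.lt_inf'_iff]
    exact fun k _ => (hπ k).1
  obtain ⟨k0⟩ : Nonempty (Fin N) := ⟨⟨0, Nat.pos_of_ne_zero (NeZero.ne N)⟩⟩
  have hKy : 0 ≤ Ky := le_trans (abs_nonneg (y k0)) (Finset.le_sup' (fun k => |y k|) (mem_univ k0))
  have hK0 : 0 ≤ K := div_nonneg hKy hKp.le
  set c : Fin N → ℝ := fun k => y k / π k with hc_def
  have hcK : ∀ k, |c k| ≤ K := by
    intro k
    simp only [hc_def]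
    rw [abs_div, abs_of_pos (hπ k).1, hK_def]
    exact div_le_div₀ hKy (Finset.le_sup' (fun k => |y k|) (mem_univ k)) hKp
      (Finset.inf'_le _ (mem_univ k))
  set B : ℝ := ∑ k, |c k| with hB_def
  set S : ℕ → Ω → ℝ := fun i ω => ∑ k, c k * M i ω k with hS_def
  have hB0 : 0 ≤ B := Finset.sum_nonneg fun k _ => abs_nonneg _
  have hMabs : ∀ i ω k, |M i ω k| ≤ 1 := by
    intro i ω k
    have h := hM01 i ω k
    rw [abs_le]; constructor <;> [linarith [h.1]; exact h.2]
  have hSbound : ∀ i ω, |S i ω| ≤ B := by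
    intro i ω
    simp only [hS_def, hB_def]
    refine le_trans (Finset.abs_sum_le_sum_abs _ _) (Finset.sum_le_sum fun k _ => ?_)
    rw [abs_mul]
    calc |c k| * |M i ω k| ≤ |c k| * 1 :=
          mul_le_mul_of_nonneg_left (hMabs i ω k) (abs_nonneg _)
      _ = |c k| := mul_one _
  have hMkmeas : ∀ i k, StronglyMeasurable[ℱ i] (fun ω => M i ω k) := fun i k =>
    (continuous_apply k).comp_stronglyMeasurable (hM.stronglyAdapted i)
  have hMkint : ∀ i k, Integrable (fun ω => M i ω k) μ := fun i k =>
    (integrable_const (1:ℝ)).mono'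
      ((hMkmeas i k).mono (ℱ.le i)).aestronglyMeasurable
      (Filter.Eventually.of_forall fun ω => by
        simpa using hMabs i ω k)
  have hSmeas : ∀ i, StronglyMeasurable[ℱ i] (S i) := by
    intro i
    simp only [hS_def]
    exact Finset.stronglyMeasurable_fun_sum _ fun k _ => (hMkmeas i k).const_mul (c k)
  have hSint : ∀ i, Integrable (S i) μ := fun i =>
    (integrable_const B).mono' ((hSmeas i).mono (ℱ.le i)).aestronglyMeasurable
      (Filter.Eventually.of_forall fun ω => by simpa using hSbound i ω)
  -- conditional expectation property of the scalar martingale S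
  have hcoord : ∀ (j : ℕ) (k : Fin N),
      (fun ω => M j ω k) =ᵐ[μ] μ[(fun ω => M (j+1) ω k) | ℱ j] := by
    intro j k
    refine ae_eq_condExp_of_forall_setIntegral_eq (ℱ.le j) (hMkint (j+1) k)
      (fun s _ _ => (hMkint j k).integrableOn) (fun s hs _ => ?_)
      ((hMkmeas j k).aestronglyMeasurable)
    have hvec := hM.setIntegral_eq (Nat.le_succ j) hs
    have h1 := (ContinuousLinearMap.proj (R := ℝ) (φ := fun _ : Fin N => ℝ)
      k).integral_comp_comm ((hM.integrable j).integrableOn (s := s))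
    have h2 := (ContinuousLinearMap.proj (R := ℝ) (φ := fun _ : Fin N => ℝ)
      k).integral_comp_comm ((hM.integrable (j+1)).integrableOn (s := s))
    simp only [ContinuousLinearMap.proj_apply] at h1 h2
    rw [h1, h2, hvec]
  have hScond : ∀ j : ℕ, μ[S (j+1) | ℱ j] =ᵐ[μ] S j := by
    intro j
    have hrw : S (j+1) = ∑ k ∈ Finset.univ, (fun ω => c k * M (j+1) ω k) := by
      funext ω; simp only [hS_def]; simp
    have hksum : ∀ k : Fin N,
        μ[(fun ω => c k * M (j+1) ω k) | ℱ j] =ᵐ[μ] fun ω => c k * M j ω k := by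
      intro k
      have h2 : (fun ω => c k * M (j+1) ω k) = c k • (fun ω => M (j+1) ω k) := by
        funext ω; simp [smul_eq_mul]
      rw [h2]
      refine (condExp_smul (c k) _ _).trans ?_
      filter_upwards [hcoord j k] with ω hω
      simp [← hω, smul_eq_mul]
    rw [hrw]
    refine (condExp_finsetSum (fun k _ => (hMkint (j+1) k).const_mul (c k)) _).trans ?_
    have hall : ∀ᵐ ω ∂μ, ∀ k : Fin N,
        (μ[(fun ω => c k * M (j+1) ω k) | ℱ j]) ω = c k * M j ω k :=
      (MeasureTheory.ae_all_iff).2 fun k => hksum k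
    filter_upwards [hall] with ω hω
    simp only [hS_def]
    simp only [Finset.sum_apply]
    exact Finset.sum_congr rfl fun k _ => hω k
  -- the increments
  set A : ℕ → Set Ω := fun i => {ω | i < T ω} with hA_def
  have hAmeas : ∀ i, MeasurableSet[ℱ i] (A i) := by
    intro i
    have : A i = {ω | (T ω : WithTop ℕ) ≤ (i : WithTop ℕ)}ᶜ := by
      ext ω; simp [hA_def, not_le]
    rw [this]
    exact (hT i).compl
  set d : ℕ → Ω → ℝ := fun i => (A i).indicator (fun ω => S (i+1) ω - S i ω) with hd_def
  have hdmeas : ∀ i j, i < j → StronglyMeasurable[ℱ j] (d i) := by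
    intro i j hij
    simp only [hd_def]
    exact (((hSmeas (i+1)).mono (ℱ.mono hij)).sub
      ((hSmeas i).mono (ℱ.mono hij.le))).indicator (ℱ.mono hij.le _ (hAmeas i))
  have hdmeas' : ∀ i, AEStronglyMeasurable (d i) μ := fun i =>
    ((hdmeas i (i+1) (Nat.lt_succ_self i)).mono (ℱ.le (i+1))).aestronglyMeasurable
  have hdbound2B : ∀ i ω, |d i ω| ≤ 2 * B := by
    intro i ω
    simp only [hd_def]
    by_cases hω : ω ∈ A i
    · rw [Set.indicator_of_mem hω]
      calc |S (i+1) ω - S i ω| ≤ |S (i+1) ω| + |S i ω| := abs_sub _ _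
        _ ≤ B + B := add_le_add (hSbound _ _) (hSbound _ _)
        _ = 2 * B := by ring
    · rw [Set.indicator_of_notMem hω]
      simpa using by linarith
  have hdint : ∀ i, Integrable (d i) μ := fun i =>
    (integrable_const (2*B)).mono' (hdmeas' i)
      (Filter.Eventually.of_forall fun ω => by simpa using hdbound2B i ω)
  have hprodint : ∀ i j, Integrable (fun ω => d i ω * d j ω) μ := fun i j =>
    (hdint j).bdd_mul (c := 2*B) (hdmeas' i)
      (Filter.Eventually.of_forall fun ω => by simpa using hdbound2B i ω)
  -- orthogonality of increments
  have horth : ∀ i j, i < j → ∫ ω, d i ω * d j ω ∂μ = 0 := by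
    intro i j hij
    set G : Ω → ℝ := fun ω => d i ω * (A j).indicator (fun _ => (1:ℝ)) ω with hG_def
    have hGmeas : StronglyMeasurable[ℱ j] G :=
      (hdmeas i j hij).mul (stronglyMeasurable_const.indicator (hAmeas j))
    have hGbound : ∀ ω, |G ω| ≤ 2*B := by
      intro ω
      simp only [hG_def]
      by_cases hω : ω ∈ A j
      · rw [Set.indicator_of_mem hω]; simpa using hdbound2B i ω
      · rw [Set.indicator_of_notMem hω]; simpa using by linarith
    have hGint : ∀ f : Ω → ℝ, Integrable f μ → Integrable (fun ω => G ω * f ω) μ :=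
      fun f hf => hf.bdd_mul (c := 2*B) (hGmeas.mono (ℱ.le j)).aestronglyMeasurable
        (Filter.Eventually.of_forall fun ω => by simpa using hGbound ω)
    have key : ∀ f : Ω → ℝ, Integrable f μ →
        ∫ ω, G ω * f ω ∂μ = ∫ ω, G ω * (μ[f|ℱ j]) ω ∂μ := by
      intro f hf
      have h1 : μ[G * f|ℱ j] =ᵐ[μ] G * μ[f|ℱ j] :=
        condExp_stronglyMeasurable_mul_of_bound (ℱ.le j) hGmeas hf (2*B)
          (Filter.Eventually.of_forall fun ω => by simpa using hGbound ω)
      calc ∫ ω, G ω * f ω ∂μ = ∫ ω, (G * f) ω ∂μ := rfl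
        _ = ∫ ω, (μ[G * f|ℱ j]) ω ∂μ := (integral_condExp (ℱ.le j)).symm
        _ = ∫ ω, (G * μ[f|ℱ j]) ω ∂μ := integral_congr_ae h1
        _ = ∫ ω, G ω * (μ[f|ℱ j]) ω ∂μ := rfl
    have hpt : ∀ ω, d i ω * d j ω = G ω * S (j+1) ω - G ω * S j ω := by
      intro ω
      simp only [hG_def]
      by_cases hω : ω ∈ A j
      · simp only [hd_def]
        simp only [Set.indicator_of_mem hω]
        ring
      · simp only [hd_def]
        simp only [Set.indicator_of_notMem hω]
        ring
    have h2 : ∫ ω, d i ω * d j ω ∂μ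
        = (∫ ω, G ω * S (j+1) ω ∂μ) - ∫ ω, G ω * S j ω ∂μ := by
      rw [← integral_sub (hGint _ (hSint (j+1))) (hGint _ (hSint j))]
      exact integral_congr_ae (Filter.Eventually.of_forall fun ω => hpt ω)
    have h3 : ∫ ω, G ω * S (j+1) ω ∂μ = ∫ ω, G ω * S j ω ∂μ := by
      rw [key _ (hSint (j+1))]
      refine integral_congr_ae ?_
      filter_upwards [hScond j] with ω hω
      rw [hω]
    rw [h2, h3, sub_self]
  -- per-step second moment bound
  have hd2 : ∀ i, ∫ ω, d i ω * d i ω ∂μ ≤ (K * C)^2 * (μ (A i)).toReal := by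
    intro i
    have hpt : ∀ᵐ ω ∂μ, d i ω * d i ω
        ≤ (K*C)^2 * (A i).indicator (fun _ => (1:ℝ)) ω := by
      filter_upwards [hC] with ω hCω
      by_cases hω : ω ∈ A i
      · simp only [hd_def]
        simp only [Set.indicator_of_mem hω]
        have h1 : |S (i+1) ω - S i ω| ≤ K * C := by
          have hrw : S (i+1) ω - S i ω = ∑ k, c k * (M (i+1) ω k - M i ω k) := by
            simp only [hS_def]
            simp [mul_sub, Finset.sum_sub_distrib]
          rw [hrw]
          set F := Finset.univ.filter (fun k => M (i+1) ω k ≠ M i ω k) with hF_def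
          calc |∑ k, c k * (M (i+1) ω k - M i ω k)|
              ≤ ∑ k, |c k * (M (i+1) ω k - M i ω k)| := Finset.abs_sum_le_sum_abs _ _
            _ = ∑ k ∈ F, |c k * (M (i+1) ω k - M i ω k)| := by
                rw [hF_def]
                refine (Finset.sum_filter_of_ne fun k _ hk => ?_).symm
                intro heq
                exact hk (by rw [heq, sub_self, mul_zero, abs_zero])
            _ ≤ ∑ _k ∈ F, K := Finset.sum_le_sum fun k _ => by
                rw [abs_mul]
                have hd1 : |M (i+1) ω k - M i ω k| ≤ 1 := by
                  have h1 := hM01 (i+1) ω k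
                  have h2 := hM01 i ω k
                  rw [abs_le]
                  constructor <;> [linarith [h1.1, h2.2]; linarith [h1.2, h2.1]]
                calc |c k| * |M (i+1) ω k - M i ω k| ≤ K * 1 :=
                      mul_le_mul (hcK k) hd1 (abs_nonneg _) hK0
                  _ = K := mul_one _
            _ = F.card * K := by rw [Finset.sum_const, nsmul_eq_mul]
            _ ≤ C * K := by
                have := hCω i
                rw [← hF_def] at this
                exact mul_le_mul_of_nonneg_right (by exact_mod_cast this) hK0
            _ = K * C := mul_comm _ _
        nlinarith [abs_nonneg (S (i+1) ω - S i ω),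
          abs_mul_abs_self (S (i+1) ω - S i ω)]
      · simp only [hd_def]
        simp [Set.indicator_of_notMem hω]
    have hint3 : Integrable
        (fun ω => (K*C)^2 * (A i).indicator (fun _ => (1:ℝ)) ω) μ :=
      (((integrable_const (1:ℝ)).indicator ((ℱ.le i) _ (hAmeas i)))).const_mul _
    calc ∫ ω, d i ω * d i ω ∂μ
        ≤ ∫ ω, (K*C)^2 * (A i).indicator (fun _ => (1:ℝ)) ω ∂μ :=
          integral_mono_ae (hprodint i i) hint3 hpt
      _ = (K*C)^2 * ∫ ω, (A i).indicator (fun _ => (1:ℝ)) ω ∂μ :=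
          integral_const_mul _ _
      _ = (K*C)^2 * (μ (A i)).toReal := by
          rw [integral_indicator ((ℱ.le i) _ (hAmeas i)), setIntegral_const]
          simp [Measure.real]
  -- sums of tail probabilities bounded by E[T]
  have hindint : ∀ i : ℕ, Integrable ((A i).indicator (fun _ => (1:ℝ))) μ :=
    fun i => (integrable_const (1:ℝ)).indicator ((ℱ.le i) _ (hAmeas i))
  have htail : ∀ n : ℕ, ∑ i ∈ Finset.range n, (μ (A i)).toReal
      ≤ ∫ ω, (T ω : ℝ) ∂μ := by
    intro n
    have h1 : ∀ i : ℕ, (μ (A i)).toReal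
        = ∫ ω, (A i).indicator (fun _ => (1:ℝ)) ω ∂μ := by
      intro i
      rw [integral_indicator ((ℱ.le i) _ (hAmeas i)), setIntegral_const]
      simp [Measure.real]
    have hpt : ∀ ω, ∑ i ∈ Finset.range n, (A i).indicator (fun _ => (1:ℝ)) ω
        ≤ (T ω : ℝ) := by
      intro ω
      have h2 : ∀ i : ℕ, (A i).indicator (fun _ => (1:ℝ)) ω
          = if i < T ω then (1:ℝ) else 0 := by
        intro i
        rw [Set.indicator_apply]
        simp [hA_def]
      calc ∑ i ∈ Finset.range n, (A i).indicator (fun _ => (1:ℝ)) ω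
          = ∑ i ∈ Finset.range n, if i < T ω then (1:ℝ) else 0 :=
            Finset.sum_congr rfl fun i _ => h2 i
        _ = ((Finset.range n).filter (fun i => i < T ω)).card := by
            rw [Finset.sum_boole]
        _ ≤ ((Finset.range (T ω)).card : ℝ) := by
            have : (Finset.range n).filter (fun i => i < T ω)
                ⊆ Finset.range (T ω) := by
              intro j hj
              simp only [Finset.mem_filter, Finset.mem_range] at hj ⊢
              exact hj.2
            exact_mod_cast Nat.cast_le.mpr (Finset.card_le_card this)
        _ = (T ω : ℝ) := by rw [Finset.card_range]
    calc ∑ i ∈ Finset.range n, (μ (A i)).toReal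
        = ∑ i ∈ Finset.range n, ∫ ω, (A i).indicator (fun _ => (1:ℝ)) ω ∂μ :=
          Finset.sum_congr rfl fun i _ => h1 i
      _ = ∫ ω, ∑ i ∈ Finset.range n, (A i).indicator (fun _ => (1:ℝ)) ω ∂μ :=
          (integral_finset_sum _ fun i _ => hindint i).symm
      _ ≤ ∫ ω, (T ω : ℝ) ∂μ :=
          integral_mono (integrable_finset_sum _ fun i _ => hindint i) hTint hpt
  -- partial sums
  have hsum : ∀ n ω, ∑ i ∈ Finset.range n, d i ω = S (min (T ω) n) ω - S 0 ω := by
    intro n ω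
    have h1 : ∀ i : ℕ, d i ω = if i < T ω then S (i+1) ω - S i ω else 0 := by
      intro i
      simp only [hd_def, Set.indicator_apply]
      simp [hA_def]
    have h2 : (Finset.range n).filter (fun i => i < T ω)
        = Finset.range (min (T ω) n) := by
      ext j
      simp only [Finset.mem_filter, Finset.mem_range, Nat.lt_min]
      tauto
    calc ∑ i ∈ Finset.range n, d i ω
        = ∑ i ∈ Finset.range n, if i < T ω then S (i+1) ω - S i ω else 0 :=
          Finset.sum_congr rfl fun i _ => h1 i
      _ = ∑ i ∈ (Finset.range n).filter (fun i => i < T ω), (S (i+1) ω - S i ω) :=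
          (Finset.sum_filter _ _).symm
      _ = ∑ i ∈ Finset.range (min (T ω) n), (S (i+1) ω - S i ω) := by rw [h2]
      _ = S (min (T ω) n) ω - S 0 ω := Finset.sum_range_sub (fun i => S i ω) _
  have hEn : ∀ n : ℕ, ∫ ω, (∑ i ∈ Finset.range n, d i ω)^2 ∂μ
      ≤ (K * C)^2 * ∫ ω, (T ω : ℝ) ∂μ := by
    intro n
    have hexp : ∫ ω, (∑ i ∈ Finset.range n, d i ω)^2 ∂μ
        = ∑ i ∈ Finset.range n, ∑ j ∈ Finset.range n, ∫ ω, d i ω * d j ω ∂μ := by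
      calc ∫ ω, (∑ i ∈ Finset.range n, d i ω)^2 ∂μ
          = ∫ ω, ∑ i ∈ Finset.range n, ∑ j ∈ Finset.range n, d i ω * d j ω ∂μ := by
            refine integral_congr_ae (Filter.Eventually.of_forall fun ω => ?_)
            show (∑ i ∈ Finset.range n, d i ω)^2
              = ∑ i ∈ Finset.range n, ∑ j ∈ Finset.range n, d i ω * d j ω
            rw [pow_two, Finset.sum_mul_sum]
        _ = ∑ i ∈ Finset.range n, ∫ ω, ∑ j ∈ Finset.range n, d i ω * d j ω ∂μ :=
            integral_finset_sum _ fun i _ =>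
              integrable_finset_sum _ fun j _ => hprodint i j
        _ = ∑ i ∈ Finset.range n, ∑ j ∈ Finset.range n, ∫ ω, d i ω * d j ω ∂μ :=
            Finset.sum_congr rfl fun i _ => integral_finset_sum _ fun j _ => hprodint i j
    have hdiag : ∀ i ∈ Finset.range n,
        ∑ j ∈ Finset.range n, ∫ ω, d i ω * d j ω ∂μ = ∫ ω, d i ω * d i ω ∂μ := by
      intro i hi
      refine Finset.sum_eq_single_of_mem i hi fun j _ hji => ?_
      rcases lt_or_gt_of_ne hji with h | h
      · have := horth j i h
        rw [← this]
        exact integral_congr_ae (Filter.Eventually.of_forall fun ω => mul_comm _ _)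
      · exact horth i j h
    rw [hexp, Finset.sum_congr rfl hdiag]
    calc ∑ i ∈ Finset.range n, ∫ ω, d i ω * d i ω ∂μ
        ≤ ∑ i ∈ Finset.range n, (K * C)^2 * (μ (A i)).toReal :=
          Finset.sum_le_sum fun i _ => hd2 i
      _ = (K * C)^2 * ∑ i ∈ Finset.range n, (μ (A i)).toReal := by
          rw [Finset.mul_sum]
      _ ≤ (K * C)^2 * ∫ ω, (T ω : ℝ) ∂μ :=
          mul_le_mul_of_nonneg_left (htail n) (sq_nonneg _)
  -- dominated convergence
  have hDCT : ∫ ω, (S (T ω) ω - S 0 ω)^2 ∂μ ≤ (K * C)^2 * ∫ ω, (T ω : ℝ) ∂μ := by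
    have hXb : ∀ n ω, |∑ i ∈ Finset.range n, d i ω| ≤ 2 * B := by
      intro n ω
      rw [hsum]
      calc |S (min (T ω) n) ω - S 0 ω| ≤ |S (min (T ω) n) ω| + |S 0 ω| := abs_sub _ _
        _ ≤ B + B := add_le_add (hSbound _ _) (hSbound _ _)
        _ = 2 * B := by ring
    have hFmeas : ∀ n : ℕ,
        AEStronglyMeasurable (fun ω => (∑ i ∈ Finset.range n, d i ω)^2) μ := by
      intro n
      exact ((Finset.aestronglyMeasurable_fun_sum _ fun i _ => hdmeas' i).pow 2)
    have hbd : ∀ n : ℕ, ∀ᵐ ω ∂μ, ‖(∑ i ∈ Finset.range n, d i ω)^2‖ ≤ (2*B)^2 := by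
      intro n
      refine Filter.Eventually.of_forall fun ω => ?_
      rw [Real.norm_eq_abs, abs_pow]
      have h0 : (0:ℝ) ≤ |∑ i ∈ Finset.range n, d i ω| := abs_nonneg _
      nlinarith [hXb n ω]
    have hlim : ∀ ω, Filter.Tendsto (fun n => (∑ i ∈ Finset.range n, d i ω)^2)
        Filter.atTop (nhds ((S (T ω) ω - S 0 ω)^2)) := by
      intro ω
      refine tendsto_atTop_of_eventually_const (i₀ := T ω) fun n hn => ?_
      rw [hsum, min_eq_left hn]
    have htend := tendsto_integral_of_dominated_convergence
      (bound := fun _ => (2*B)^2) hFmeas (integrable_const _) hbd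
      (Filter.Eventually.of_forall hlim)
    exact le_of_tendsto htend (Filter.Eventually.of_forall hEn)
  -- variance bound
  set cc : ℝ := ∑ k, c k * π k with hcc_def
  have hmain : ∫ ω, (S (T ω) ω - cc)^2 ∂μ ≤ (K * C)^2 * ∫ ω, (T ω : ℝ) ∂μ := by
    refine le_trans (le_of_eq ?_) hDCT
    refine integral_congr_ae ?_
    filter_upwards [hM0] with ω h0
    have : S 0 ω = cc := by
      simp only [hS_def, hcc_def, h0]
    rw [this]
  have hfmeas : AEStronglyMeasurable (fun ω => S (T ω) ω) μ := by
    have hprog := hM.stronglyAdapted.isStronglyProgressive_of_discrete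
    have h1 : Measurable[hT.measurableSpace]
        (MeasureTheory.stoppedValue M (fun ω => (T ω : WithTop ℕ))) :=
      measurable_stoppedValue hprog hT
    have h2 : Measurable (MeasureTheory.stoppedValue M (fun ω => (T ω : WithTop ℕ))) :=
      h1.mono hT.measurableSpace_le le_rfl
    have h2' : MeasureTheory.stoppedValue M (fun ω => (T ω : WithTop ℕ))
        = fun ω => M (T ω) ω := by
      funext ω; rfl
    rw [h2'] at h2
    have h3 : Measurable (fun ω => S (T ω) ω) := by
      simp only [hS_def]
      exact Finset.measurable_sum _ fun k _ =>
        ((measurable_pi_apply k).comp h2).const_mul (c k)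
    exact h3.aestronglyMeasurable
  have hfmem : MemLp (fun ω => S (T ω) ω) 2 μ :=
    MemLp.of_bound hfmeas B (Filter.Eventually.of_forall fun ω => by
      simpa using hSbound (T ω) ω)
  have hvar : variance (fun ω => S (T ω) ω) μ ≤ ∫ ω, (S (T ω) ω - cc)^2 ∂μ := by
    have hint1 : Integrable (fun ω => S (T ω) ω) μ := hfmem.integrable one_le_two
    have hint2 : Integrable (fun ω => S (T ω) ω ^ 2) μ := hfmem.integrable_sq
    have hexp2 : ∫ ω, (S (T ω) ω - cc)^2 ∂μ
        = (∫ ω, S (T ω) ω ^ 2 ∂μ) - 2 * cc * (∫ ω, S (T ω) ω ∂μ) + cc^2 := by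
      have : ∀ ω, (S (T ω) ω - cc)^2
          = S (T ω) ω ^ 2 - (2 * cc) * S (T ω) ω + cc^2 := by intro ω; ring
      rw [integral_congr_ae (Filter.Eventually.of_forall this)]
      have hsub : Integrable (fun ω => S (T ω) ω ^ 2 - 2 * cc * S (T ω) ω) μ :=
        hint2.sub (hint1.const_mul (2*cc))
      rw [integral_add hsub (integrable_const _),
        integral_sub hint2 (hint1.const_mul (2*cc)), integral_const_mul,
        integral_const]
      simp
    rw [variance_eq_sub hfmem, hexp2]
    have : (0:ℝ) ≤ ((∫ ω, S (T ω) ω ∂μ) - cc)^2 := sq_nonneg _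
    have hμ1 : (μ[fun ω => S (T ω) ω] : ℝ) = ∫ ω, S (T ω) ω ∂μ := rfl
    have hμ2 : (μ[(fun ω => S (T ω) ω) ^ 2] : ℝ) = ∫ ω, S (T ω) ω ^ 2 ∂μ := rfl
    rw [hμ1, hμ2]
    nlinarith
  calc variance (fun ω => ∑ k, (y k / π k) * M (T ω) ω k) μ
      = variance (fun ω => S (T ω) ω) μ := rfl
    _ ≤ ∫ ω, (S (T ω) ω - cc)^2 ∂μ := hvar
    _ ≤ (K * C)^2 * ∫ ω, (T ω : ℝ) ∂μ := hmain
    _ = K ^ 2 * (C:ℝ) ^ 2 * ∫ ω, (T ω : ℝ) ∂μ := by ring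
end

section
/- (Proposition 4 of the paper.) Consider a sequence indexed by t ∈ ℕ of martingale sampling algorithms: for each t, a [0,1]^{N_t}-valued martingale (M_{i,t})_{i∈ℕ} with deterministic initial value π_t ∈ (0,1]^{N_t}, and an a.s. finite stopping time T_t with E[T_t] < ∞ such that M_{i,t} = M_{T_t,t} ∈ {0,1}^{N_t} for i ≥ T_t; write I_t = M_{T_t,t}, n_t = Σ_{k} π_{k,t}, and let y_t : {1,…,N_t} → ℝ with total t_{y,t}. Assume: (H1) n_t/N_t → f for some f ∈ (0,1), with N_t → ∞; (H2) there exists λ₁ > 0 with min_k π_{k,t} ≥ λ₁ for all t; (H3b) there exists C₁ with |y_{k,t}| ≤ C₁ for all t and k; there exists a constant C with, almost surely, card{k : M_{i+1,k,t} ≠ M_{i,k,t}} ≤ C for all i and t (i.e. 𝒞_t = O(1)); and there exists a constant K₀ with E[T_t] ≤ K₀ N_t for all t (i.e. E(T_t) = O(N_t)). Then the Narain–Horvitz–Thompson estimators t̂_{yπ,t} = Σ_k (y_{k,t}/π_{k,t}) I_{k,t} satisfy E[ (N_t^{-1}(t̂_{yπ,t} − t_{y,t}))² ] = O(n_t^{-1}),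 i.e. there exist a constant K and t₀ such that for all t ≥ t₀, E[ (N_t^{-1}(t̂_{yπ,t} − t_{y,t}))² ] ≤ K / n_t. -/
open MeasureTheory ProbabilityTheory Finset Filter

lemma mart_sq_bound {Ω : Type*} {m0 : MeasurableSpace Ω} {μ : Measure Ω}
    [IsProbabilityMeasure μ] {ℱ : Filtration ℕ m0} {X : ℕ → Ω → ℝ}
    (hX : Martingale X ℱ μ) (S : ℝ) (hS : ∀ i ω, |X i ω| ≤ S)
    {T : Ω → ℕ} (hT : IsStoppingTime ℱ (fun ω => (T ω : WithTop ℕ)))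
    (hTint : Integrable (fun ω => (T ω : ℝ)) μ)
    {B : ℝ} (hB : 0 ≤ B)
    (hinc : ∀ᵐ ω ∂μ, ∀ i, |X (i+1) ω - X i ω| ≤ B)
    (hzero : ∀ᵐ ω ∂μ, ∀ i, T ω ≤ i → X (i+1) ω = X i ω)
    (hlim : ∀ᵐ ω ∂μ, ∀ i, T ω ≤ i → X i ω = X (T ω) ω) :
    ∫ ω, (X (T ω) ω - X 0 ω) ^ 2 ∂μ ≤ B ^ 2 * ∫ ω, (T ω : ℝ) ∂μ := by
  -- basic measurability / integrability
  have hXm : ∀ i, StronglyMeasurable (X i) := fun i => (hX.stronglyAdapted i).mono (ℱ.le i)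
  have hbdd : ∀ (g : Ω → ℝ), StronglyMeasurable g → (∀ ω, |g ω| ≤ 2*S) →
      Integrable g μ := by
    intro g hg hgb
    exact ⟨hg.aestronglyMeasurable,
      HasFiniteIntegral.of_bounded (C := 2*S) (ae_of_all _ fun ω => by
        simpa [Real.norm_eq_abs] using hgb ω)⟩
  have hXb2 : ∀ i j ω, |X i ω - X j ω| ≤ 2*S := by
    intro i j ω
    calc |X i ω - X j ω| ≤ |X i ω| + |X j ω| := abs_sub _ _
    _ ≤ S + S := add_le_add (hS i ω) (hS j ω)
    _ = 2*S := by ring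
  -- cross term vanishes
  have hcross : ∀ m, ∫ ω, (X m ω - X 0 ω) * (X (m+1) ω - X m ω) ∂μ = 0 := by
    intro m
    set Z : Ω → ℝ := fun ω => X m ω - X 0 ω with hZ
    set G : Ω → ℝ := fun ω => X (m+1) ω - X m ω with hG
    have hZmeas : StronglyMeasurable[ℱ m] Z :=
      (hX.stronglyAdapted m).sub ((hX.stronglyAdapted 0).mono (ℱ.mono (Nat.zero_le m)))
    have hGint : Integrable G μ := (hX.integrable (m+1)).sub (hX.integrable m)
    have hZGint : Integrable (Z * G) μ := by
      have : ∀ ω, |(Z*G) ω| ≤ (2*S)*(2*S) := fun ω => by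
        simp only [Pi.mul_apply, abs_mul]
        exact mul_le_mul (hXb2 _ _ ω) (hXb2 _ _ ω) (abs_nonneg _)
          ((abs_nonneg _).trans (hXb2 m 0 ω))
      refine ⟨((hZmeas.mono (ℱ.le m)).mul ((hXm (m+1)).sub (hXm m))).aestronglyMeasurable,
        HasFiniteIntegral.of_bounded (C := (2*S)*(2*S)) (ae_of_all _ fun ω => by
          simpa [Real.norm_eq_abs, Pi.mul_apply, abs_mul] using this ω)⟩
    have hcond : μ[G | ℱ m] =ᵐ[μ] 0 := by
      have h1 : μ[X (m+1) | ℱ m] =ᵐ[μ] X m := hX.condExp_ae_eq (Nat.le_succ m)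
      have h2 : μ[X m | ℱ m] =ᵐ[μ] X m :=
        .of_eq (condExp_of_stronglyMeasurable (ℱ.le m) (hX.stronglyAdapted m) (hX.integrable m))
      calc μ[G | ℱ m] =ᵐ[μ] μ[X (m+1)|ℱ m] - μ[X m|ℱ m] :=
            condExp_sub (hX.integrable (m+1)) (hX.integrable m) _
        _ =ᵐ[μ] X m - X m := h1.sub h2
        _ = 0 := by simp
    have hpull : μ[Z * G | ℱ m] =ᵐ[μ] Z * μ[G | ℱ m] :=
      condExp_mul_of_stronglyMeasurable_left hZmeas hZGint hGint
    have : ∫ ω, (Z * G) ω ∂μ = ∫ ω, (μ[Z * G | ℱ m]) ω ∂μ :=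
      (integral_condExp (ℱ.le m)).symm
    rw [show (fun ω => (X m ω - X 0 ω) * (X (m+1) ω - X m ω)) = Z * G from rfl] at *
    rw [this, integral_congr_ae (hpull.trans ?_), integral_zero]
    filter_upwards [hcond] with ω hω
    simp [hω]
  -- measurability of level sets of T
  have hTmeas : ∀ i, MeasurableSet {ω | i < T ω} := fun i => by simpa using ℱ.le i _ (hT.measurableSet_gt i)
  have hsqmeas : ∀ i j, StronglyMeasurable (fun ω => (X i ω - X j ω)^2) :=
    fun i j => ((hXm i).sub (hXm j)).pow 2
  have hsqint : ∀ i j, Integrable (fun ω => (X i ω - X j ω)^2) μ := by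
    intro i j
    refine ⟨(hsqmeas i j).aestronglyMeasurable,
      HasFiniteIntegral.of_bounded (C := (2*S)^2) (ae_of_all _ fun ω => ?_)⟩
    rw [Real.norm_eq_abs, abs_of_nonneg (sq_nonneg _)]
    have := abs_le.mp (hXb2 i j ω)
    exact sq_le_sq' this.1 this.2
  have hcrossint : ∀ m, Integrable (fun ω => (X m ω - X 0 ω) * (X (m+1) ω - X m ω)) μ := by
    intro m
    refine ⟨(((hXm m).sub (hXm 0)).mul ((hXm (m+1)).sub (hXm m))).aestronglyMeasurable,
      HasFiniteIntegral.of_bounded (C := (2*S)*(2*S)) (ae_of_all _ fun ω => ?_)⟩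
    rw [Real.norm_eq_abs, abs_mul]
    exact mul_le_mul (hXb2 _ _ ω) (hXb2 _ _ ω) (abs_nonneg _)
      ((abs_nonneg _).trans (hXb2 m 0 ω))
  -- main induction
  have hmain : ∀ m, ∫ ω, (X m ω - X 0 ω)^2 ∂μ ≤
      B^2 * ∑ i ∈ Finset.range m, (μ {ω | i < T ω}).toReal := by
    intro m
    induction m with
    | zero => simp
    | succ m ih =>
      have hsplit : (fun ω => (X (m+1) ω - X 0 ω)^2) =
          (fun ω => ((X m ω - X 0 ω)^2 +
            2*((X m ω - X 0 ω)*(X (m+1) ω - X m ω))) + (X (m+1) ω - X m ω)^2) :=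
        funext fun ω => by ring
      have hlast : ∫ ω, (X (m+1) ω - X m ω)^2 ∂μ ≤ (μ {ω | m < T ω}).toReal * B^2 := by
        have hind : Integrable ({ω | m < T ω}.indicator fun _ => B^2) μ :=
          (integrable_const _).indicator (hTmeas m)
        calc ∫ ω, (X (m+1) ω - X m ω)^2 ∂μ
            ≤ ∫ ω, ({ω' | m < T ω'}.indicator fun _ => B^2) ω ∂μ := by
              refine integral_mono_ae (hsqint _ _) hind ?_
              filter_upwards [hinc, hzero] with ω h1 h2
              by_cases h : T ω ≤ m
              · rw [h2 m h]
                simpa using Set.indicator_nonneg (fun _ _ => sq_nonneg B) ω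
              · rw [Set.indicator_of_mem (by simpa using Nat.lt_of_not_le h)]
                have := abs_le.mp (h1 m)
                exact sq_le_sq' this.1 this.2
          _ = (μ {ω | m < T ω}).toReal * B^2 := by
              rw [integral_indicator_const _ (hTmeas m)]; simp [smul_eq_mul, measureReal_def]
      have hint1 : Integrable (fun ω => (X m ω - X 0 ω)^2 +
          2*((X m ω - X 0 ω)*(X (m+1) ω - X m ω))) μ :=
        (hsqint m 0).add ((hcrossint m).const_mul 2)
      rw [hsplit, integral_add hint1 (hsqint (m+1) m),
        integral_add (hsqint m 0) ((hcrossint m).const_mul 2),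
        integral_const_mul, hcross m, Finset.sum_range_succ, mul_add]
      simp only [mul_zero, add_zero]
      exact add_le_add ih (by rw [mul_comm]; exact hlast)
  -- sum of tail probabilities bounded by E[T]
  have hsum : ∀ m, ∑ i ∈ Finset.range m, (μ {ω | i < T ω}).toReal ≤
      ∫ ω, (T ω : ℝ) ∂μ := by
    intro m
    have h1 : ∀ i, (μ {ω | i < T ω}).toReal =
        ∫ ω, Set.indicator {ω' | i < T ω'} (fun _ => (1:ℝ)) ω ∂μ := by
      intro i; rw [integral_indicator_const _ (hTmeas i)]; simp [measureReal_def]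
    calc ∑ i ∈ Finset.range m, (μ {ω | i < T ω}).toReal
        = ∫ ω, ∑ i ∈ Finset.range m,
            Set.indicator {ω' | i < T ω'} (fun _ => (1:ℝ)) ω ∂μ := by
          rw [integral_finset_sum _
            (fun i _ => (integrable_const _).indicator (hTmeas i))]
          exact Finset.sum_congr rfl fun i _ => h1 i
      _ ≤ ∫ ω, (T ω : ℝ) ∂μ := by
          refine integral_mono (integrable_finset_sum _
            (fun i _ => (integrable_const _).indicator (hTmeas i))) hTint fun ω => ?_
          have : ∑ i ∈ Finset.range m,
              Set.indicator {ω' | i < T ω'} (fun _ => (1:ℝ)) ω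
              = (((Finset.range m).filter (fun i => i < T ω)).card : ℝ) := by
            simp only [Set.indicator_apply, Set.mem_setOf_eq]
            rw [Finset.sum_boole]
          rw [this]
          have hsub : (Finset.range m).filter (fun i => i < T ω) ⊆
              Finset.range (T ω) := fun i hi =>
            Finset.mem_range.mpr (Finset.mem_filter.mp hi).2
          convert (Nat.cast_le (α := ℝ)).mpr ((Finset.card_le_card hsub).trans_eq (Finset.card_range _))
  have hbound : ∀ m, ∫ ω, (X m ω - X 0 ω)^2 ∂μ ≤ B^2 * ∫ ω, (T ω : ℝ) ∂μ :=
    fun m => (hmain m).trans (mul_le_mul_of_nonneg_left (hsum m) (sq_nonneg B))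
  -- pass to the limit
  have htend : Tendsto (fun m => ∫ ω, (X m ω - X 0 ω)^2 ∂μ) atTop
      (nhds (∫ ω, (X (T ω) ω - X 0 ω)^2 ∂μ)) := by
    refine tendsto_integral_of_dominated_convergence (fun _ => (2*S)^2)
      (fun m => (hsqmeas m 0).aestronglyMeasurable) (integrable_const _)
      (fun m => ae_of_all _ fun ω => ?_) ?_
    · rw [Real.norm_eq_abs, abs_of_nonneg (sq_nonneg _)]
      have := abs_le.mp (hXb2 m 0 ω)
      exact sq_le_sq' this.1 this.2
    · filter_upwards [hlim] with ω hω
      have : ∀ m ≥ T ω, (X m ω - X 0 ω)^2 = (X (T ω) ω - X 0 ω)^2 :=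
        fun m hm => by rw [hω m hm]
      exact tendsto_atTop_of_eventually_const this
  exact le_of_tendsto htend (Eventually.of_forall hbound)

/-- Proposition 4: for a sequence of martingale sampling algorithms, under
(H1), (H2), (H3b), `𝒞_t = O(1)` and `E(T_t) = O(N_t)`, the
Narain–Horvitz–Thompson estimator is mean-square consistent, with
`E[(N_t⁻¹(t̂_{yπ,t} − t_{y,t}))²] = O(n_t⁻¹)`. -/
theorem martingale_sampling_mean_square_consistency
    (N : ℕ → ℕ) (hNpos : ∀ t, 1 ≤ N t)
    (hNinf : Tendsto (fun t => (N t : ℝ)) atTop atTop)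
    (Ω : ℕ → Type*) (m : ∀ t, MeasurableSpace (Ω t))
    (μ : ∀ t, Measure (Ω t)) [∀ t, IsProbabilityMeasure (μ t)]
    (ℱ : ∀ t, Filtration ℕ (m t))
    (M : ∀ t, ℕ → Ω t → (Fin (N t) → ℝ))
    (hM : ∀ t, Martingale (M t) (ℱ t) (μ t))
    (hM01 : ∀ t i ω k, M t i ω k ∈ Set.Icc (0 : ℝ) 1)
    (π : ∀ t, Fin (N t) → ℝ)
    (hπ : ∀ t k, π t k ∈ Set.Ioc (0 : ℝ) 1)
    (hM0 : ∀ t, ∀ᵐ ω ∂(μ t), M t 0 ω = π t)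
    (T : ∀ t, Ω t → ℕ)
    (hT : ∀ t, IsStoppingTime (ℱ t) (fun ω => (T t ω : WithTop ℕ)))
    (hTint : ∀ t, Integrable (fun ω => (T t ω : ℝ)) (μ t))
    (hstop : ∀ t, ∀ᵐ ω ∂(μ t), ∀ i, T t ω ≤ i → M t i ω = M t (T t ω) ω)
    (hfinal : ∀ t, ∀ᵐ ω ∂(μ t), ∀ k,
      M t (T t ω) ω k = 0 ∨ M t (T t ω) ω k = 1)
    (y : ∀ t, Fin (N t) → ℝ)
    (n : ℕ → ℝ) (hn : ∀ t, n t = ∑ k, π t k)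
    -- (H1)
    (f : ℝ) (hf : f ∈ Set.Ioo (0 : ℝ) 1)
    (H1 : Tendsto (fun t => n t / N t) atTop (nhds f))
    -- (H2)
    (lam₁ : ℝ) (hlam₁ : 0 < lam₁) (H2 : ∀ t k, lam₁ ≤ π t k)
    -- (H3b)
    (C₁ : ℝ) (H3b : ∀ t k, |y t k| ≤ C₁)
    -- 𝒞_t = O(1)
    (C : ℕ)
    (hC : ∀ t, ∀ᵐ ω ∂(μ t), ∀ i,
      (Finset.univ.filter (fun k => M t (i+1) ω k ≠ M t i ω k)).card ≤ C)
    -- E(T_t) = O(N_t)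
    (K₀ : ℝ) (hK₀ : ∀ t, (∫ ω, (T t ω : ℝ) ∂(μ t)) ≤ K₀ * N t) :
    ∃ K : ℝ, ∃ t₀ : ℕ, ∀ t ≥ t₀,
      (∫ ω, ((N t : ℝ)⁻¹ *
          ((∑ k, (y t k / π t k) * M t (T t ω) ω k) - ∑ k, y t k)) ^ 2
        ∂(μ t)) ≤ K / n t := by
  have hC₁ : 0 ≤ C₁ := (abs_nonneg _).trans (H3b 0 ⟨0, hNpos 0⟩)
  have hK₀0 : 0 ≤ K₀ := by
    have h1 : (0:ℝ) ≤ K₀ * N 0 :=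
      (integral_nonneg (fun ω => Nat.cast_nonneg _)).trans (hK₀ 0)
    have h2 : (0:ℝ) < N 0 := by exact_mod_cast hNpos 0
    exact (mul_nonneg_iff_of_pos_right h2).mp h1
  set B : ℝ := (C : ℝ) * (C₁ / lam₁) with hBdef
  have hBnn : 0 ≤ B := mul_nonneg (Nat.cast_nonneg _) (div_nonneg hC₁ hlam₁.le)
  refine ⟨B ^ 2 * K₀, 0, fun t _ => ?_⟩
  set X : ℕ → Ω t → ℝ := fun i ω => ∑ k, y t k / π t k * M t i ω k with hXdef
  have hπpos : ∀ k, (0:ℝ) < π t k := fun k => (hπ t k).1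
  have hcbd : ∀ k, |y t k / π t k| ≤ C₁ / lam₁ := by
    intro k
    rw [abs_div, abs_of_pos (hπpos k)]
    exact div_le_div₀ hC₁ (H3b t k) hlam₁ (H2 t k)
  -- X is a martingale
  have hcompint : ∀ j (k : Fin (N t)), Integrable (fun ω => M t j ω k) (μ t) :=
    fun j k => (ContinuousLinearMap.proj (R := ℝ) (φ := fun _ : Fin (N t) => ℝ)
      k).integrable_comp ((hM t).integrable j)
  have hXint : ∀ i, Integrable (X i) (μ t) := by
    intro i
    exact integrable_finset_sum _ fun k _ => (hcompint i k).const_mul _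
  have hXadp : StronglyAdapted (ℱ t) X := by
    intro i
    have hcont : Continuous (fun v : Fin (N t) → ℝ => ∑ k, y t k / π t k * v k) :=
      continuous_finset_sum _ fun k _ => continuous_const.mul (continuous_apply k)
    exact hcont.comp_stronglyMeasurable ((hM t).stronglyAdapted i)
  have hXmart : Martingale X (ℱ t) (μ t) := by
    refine martingale_of_setIntegral_eq_succ hXadp hXint fun i s hs => ?_
    have hproj : ∀ j (k : Fin (N t)), ∫ ω in s, M t j ω k ∂(μ t)
        = (∫ ω in s, M t j ω ∂(μ t)) k := fun j k =>
      (ContinuousLinearMap.proj (R := ℝ) (φ := fun _ : Fin (N t) => ℝ)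
        k).integral_comp_comm (((hM t).integrable j).restrict)
    have hcomp : ∀ j, ∫ ω in s, X j ω ∂(μ t)
        = ∑ k, y t k / π t k * (∫ ω in s, M t j ω ∂(μ t)) k := by
      intro j
      simp only [hXdef]
      rw [integral_finset_sum _ (fun k _ => ((hcompint j k).const_mul _).restrict)]
      exact Finset.sum_congr rfl fun k _ => by rw [integral_const_mul, hproj j k]
    rw [hcomp i, hcomp (i+1), (hM t).setIntegral_eq (Nat.le_succ i) hs]
  -- uniform bound on X
  have hS : ∀ i ω, |X i ω| ≤ (N t : ℝ) * (C₁ / lam₁) := by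
    intro i ω
    calc |X i ω| ≤ ∑ k, |y t k / π t k * M t i ω k| :=
          Finset.abs_sum_le_sum_abs _ _
      _ ≤ ∑ _k : Fin (N t), C₁ / lam₁ := by
          refine Finset.sum_le_sum fun k _ => ?_
          rw [abs_mul]
          have h01 := hM01 t i ω k
          have : |M t i ω k| ≤ 1 := abs_le.2 ⟨by linarith [h01.1], h01.2⟩
          calc |y t k / π t k| * |M t i ω k| ≤ (C₁/lam₁) * 1 :=
              mul_le_mul (hcbd k) this (abs_nonneg _)
                (div_nonneg hC₁ hlam₁.le)
            _ = C₁/lam₁ := mul_one _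
      _ = (N t : ℝ) * (C₁ / lam₁) := by
          rw [Finset.sum_const, Finset.card_univ, Fintype.card_fin, nsmul_eq_mul]
  -- increments bounded
  have hinc : ∀ᵐ ω ∂(μ t), ∀ i, |X (i+1) ω - X i ω| ≤ B := by
    filter_upwards [hC t] with ω hω i
    have hdiff : X (i+1) ω - X i ω
        = ∑ k, y t k / π t k * (M t (i+1) ω k - M t i ω k) := by
      rw [hXdef]
      simp only [← Finset.sum_sub_distrib, mul_sub]
    set s : Finset (Fin (N t)) :=
      Finset.univ.filter (fun k => M t (i+1) ω k ≠ M t i ω k) with hsdef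
    have hfil : ∑ k ∈ s, y t k / π t k * (M t (i+1) ω k - M t i ω k)
        = ∑ k, y t k / π t k * (M t (i+1) ω k - M t i ω k) := by
      refine Finset.sum_filter_of_ne fun k _ hne => ?_
      intro heq
      exact hne (by rw [heq, sub_self, mul_zero])
    rw [hdiff, ← hfil]
    calc |∑ k ∈ s, y t k / π t k * (M t (i+1) ω k - M t i ω k)|
        ≤ ∑ k ∈ s, |y t k / π t k * (M t (i+1) ω k - M t i ω k)| :=
          Finset.abs_sum_le_sum_abs _ _
      _ ≤ ∑ _k ∈ s, C₁ / lam₁ := by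
          refine Finset.sum_le_sum fun k _ => ?_
          rw [abs_mul]
          have h1 := hM01 t (i+1) ω k
          have h2 := hM01 t i ω k
          have hd : |M t (i+1) ω k - M t i ω k| ≤ 1 :=
            abs_le.2 ⟨by linarith [h1.1, h2.2], by linarith [h1.2, h2.1]⟩
          calc |y t k / π t k| * |M t (i+1) ω k - M t i ω k|
              ≤ (C₁/lam₁) * 1 := mul_le_mul (hcbd k) hd (abs_nonneg _)
                (div_nonneg hC₁ hlam₁.le)
            _ = C₁/lam₁ := mul_one _
      _ = (s.card : ℝ) * (C₁/lam₁) := by rw [Finset.sum_const, nsmul_eq_mul]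
      _ ≤ B := by
          rw [hBdef]
          exact mul_le_mul_of_nonneg_right (by exact_mod_cast hω i)
            (div_nonneg hC₁ hlam₁.le)
  have hzero : ∀ᵐ ω ∂(μ t), ∀ i, T t ω ≤ i → X (i+1) ω = X i ω := by
    filter_upwards [hstop t] with ω hω i hi
    rw [hXdef]
    simp only [hω (i+1) (hi.trans (Nat.le_succ i)), hω i hi]
  have hlim : ∀ᵐ ω ∂(μ t), ∀ i, T t ω ≤ i → X i ω = X (T t ω) ω := by
    filter_upwards [hstop t] with ω hω i hi
    rw [hXdef]
    simp only [hω i hi]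
  have hkey := mart_sq_bound hXmart _ hS (hT t) (hTint t) hBnn hinc hzero hlim
  -- identify X 0 with ∑ y a.e.
  have hX0 : ∀ᵐ ω ∂(μ t), X 0 ω = ∑ k, y t k := by
    filter_upwards [hM0 t] with ω hω
    have h1 : ∀ k, y t k / π t k * π t k = y t k :=
      fun k => div_mul_cancel₀ _ (hπpos k).ne'
    simp only [hXdef, hω, h1]
  have heq : (∫ ω, ((N t : ℝ)⁻¹ *
          ((∑ k, (y t k / π t k) * M t (T t ω) ω k) - ∑ k, y t k)) ^ 2 ∂(μ t))
      = ((N t : ℝ)⁻¹)^2 * ∫ ω, (X (T t ω) ω - X 0 ω) ^ 2 ∂(μ t) := by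
    rw [← integral_const_mul]
    refine integral_congr_ae ?_
    filter_upwards [hX0] with ω hω
    rw [mul_pow, hω]
  -- numeric endgame
  have hNpos' : (0:ℝ) < N t := by exact_mod_cast hNpos t
  have hnN : n t ≤ (N t : ℝ) := by
    rw [hn t]
    calc ∑ k, π t k ≤ ∑ _k : Fin (N t), (1:ℝ) :=
        Finset.sum_le_sum fun k _ => (hπ t k).2
      _ = (N t : ℝ) := by
        rw [Finset.sum_const, Finset.card_univ, Fintype.card_fin, nsmul_eq_mul, mul_one]
  have hnpos : 0 < n t := by
    rw [hn t]
    exact Finset.sum_pos (fun k _ => hπpos k) ⟨⟨0, hNpos t⟩, Finset.mem_univ _⟩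
  rw [heq]
  calc ((N t : ℝ)⁻¹)^2 * ∫ ω, (X (T t ω) ω - X 0 ω) ^ 2 ∂(μ t)
      ≤ ((N t : ℝ)⁻¹)^2 * (B^2 * (K₀ * N t)) := by
        refine mul_le_mul_of_nonneg_left (hkey.trans ?_) (by positivity)
        exact mul_le_mul_of_nonneg_left (hK₀ t) (sq_nonneg B)
    _ = (B^2 * K₀) / (N t : ℝ) := by field_simp
    _ ≤ (B^2 * K₀) / n t := by
        gcongr
end
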